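/- arXiv:math/0501340 — 6 statements merged into one kernel-verified Lean document; each statement's English description precedes it below -/
import Mathlib

section
/- For positive integers m and n, the lattice Co(𝐦) of order-convex subsets of the m-element chain 𝐦 embeds into Co(P) for some poset P of length at most n if and only if m ≤ n + 1. Consequently, for every positive integer n, the class SUB_n of lattices embeddable into Co(P) with lh(P) ≤ n is a proper subclass of SUB_{n+1}. -/
/-! Common definitions: lattices of order-convex subsets of a poset,
length of a poset, the identities (S), (U), (B), (L2), (H_n), (H_{m,n}),
join-irreducibility, the join-dependency relation, join-seeds,
the posets P_{I,J}, tree-like posets, D-closed sets,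
and complete lattice congruences. -/

open Set

/-- The lattice `Co P` of all order-convex subsets of a poset `P`. -/
def Co (P : Type*) [PartialOrder P] : Type _ := {s : Set P // s.OrdConnected}

namespace Co

variable {P : Type*} [PartialOrder P]

instance : PartialOrder (Co P) := Subtype.partialOrder _

instance : InfSet (Co P) :=
  ⟨fun S => ⟨⋂ s ∈ S, s.1, Set.ordConnected_biInter fun s _ => s.2⟩⟩

noncomputable instance : CompleteLattice (Co P) :=
  completeLatticeOfInf (Co P) (by
    intro S
    constructor
    · intro t ht
      exact Set.biInter_subset_of_mem (t := fun s => s.1) ht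
    · intro b hb
      exact Set.subset_iInter₂ fun t ht => hb ht)

/-- The order-convex subset of `P` with underlying set `X`. -/
def mk' (X : Set P) (hX : X.OrdConnected) : Co P := ⟨X, hX⟩

/-- The singleton `{p}`, as an order-convex set. -/
def sngl (p : P) : Co P := ⟨{p}, Set.ordConnected_singleton⟩

/-- The empty order-convex set. -/
def emp : Co P := ⟨∅, Set.ordConnected_empty⟩

end Co

/-- `lengthLE P n` states that the poset `P` has length at most `n`, that is,
every finite chain of `P` has at most `n + 1` elements. -/
def lengthLE (P : Type*) [PartialOrder P] (n : ℕ) : Prop :=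
  ∀ C : Finset P, IsChain (· ≤ ·) (C : Set P) → C.card ≤ n + 1

section Identities

/-- The Stirlitz identity (S). -/
def IdS (L : Type*) [Lattice L] : Prop :=
  ∀ a b b₀ b₁ c : L,
    a ⊓ ((b ⊓ (b₀ ⊔ b₁)) ⊔ c) =
      (a ⊓ (b ⊓ (b₀ ⊔ b₁)))
      ⊔ (a ⊓ (b₀ ⊔ c) ⊓ ((b ⊓ (b₀ ⊔ b₁) ⊓ (a ⊔ b₀)) ⊔ c))
      ⊔ (a ⊓ (b₁ ⊔ c) ⊓ ((b ⊓ (b₀ ⊔ b₁) ⊓ (a ⊔ b₁)) ⊔ c))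

/-- The Udav identity (U). -/
def IdU (L : Type*) [Lattice L] : Prop :=
  ∀ x x₀ x₁ x₂ : L,
    x ⊓ (x₀ ⊔ x₁) ⊓ (x₁ ⊔ x₂) ⊓ (x₀ ⊔ x₂) =
      (x ⊓ x₀ ⊓ (x₁ ⊔ x₂)) ⊔ (x ⊓ x₁ ⊓ (x₀ ⊔ x₂)) ⊔ (x ⊓ x₂ ⊓ (x₀ ⊔ x₁))

/-- The Bond identity (B). -/
def IdB (L : Type*) [Lattice L] : Prop :=
  ∀ x a₀ a₁ b₀ b₁ : L,
    x ⊓ (a₀ ⊔ a₁) ⊓ (b₀ ⊔ b₁) =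
      (x ⊓ a₀ ⊓ (b₀ ⊔ b₁)) ⊔ (x ⊓ a₁ ⊓ (b₀ ⊔ b₁))
      ⊔ (x ⊓ b₀ ⊓ (a₀ ⊔ a₁)) ⊔ (x ⊓ b₁ ⊓ (a₀ ⊔ a₁))
      ⊔ (x ⊓ (a₀ ⊔ a₁) ⊓ (b₀ ⊔ b₁) ⊓ (a₀ ⊔ b₀) ⊓ (a₁ ⊔ b₁))
      ⊔ (x ⊓ (a₀ ⊔ a₁) ⊓ (b₀ ⊔ b₁) ⊓ (a₀ ⊔ b₁) ⊓ (a₁ ⊔ b₀))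

/-- The identity (L₂). -/
def IdL2 (L : Type*) [Lattice L] : Prop :=
  ∀ a b b' c c' : L,
    a ⊓ ((b ⊓ (c ⊔ c')) ⊔ b') =
      (a ⊓ b ⊓ (c ⊔ c')) ⊔ (a ⊓ ((b ⊓ c) ⊔ b')) ⊔ (a ⊓ ((b ⊓ c') ⊔ b'))

variable {L : Type*} [Lattice L]

/-- The lattice polynomial `U_{i,n}` (in the variables `x₀, …, xₙ, x'₁, …, x'ₙ`). -/
def Upoly (x x' : ℕ → L) (n : ℕ) (i : ℕ) : L :=
  if h : n ≤ i then x n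
  else x i ⊓ (Upoly x x' n (i + 1) ⊔ x' (i + 1))
  termination_by n - i
  decreasing_by omega

/-- The lattice polynomial `V_{i,j,n}`. -/
def Vpoly (x x' : ℕ → L) (n i : ℕ) (j : ℕ) : L :=
  if h : i ≤ j then (x i ⊓ Upoly x x' n (i + 1)) ⊔ (x i ⊓ x' (i + 1))
  else x j ⊓ (Vpoly x x' n i (j + 1) ⊔ x' (j + 1))
  termination_by i - j
  decreasing_by omega

/-- The lattice polynomial `W_{i,j,n}`. -/
def Wpoly (x x' : ℕ → L) (n i : ℕ) (j : ℕ) : L :=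
  if h : i ≤ j then
    x i ⊓ (x' (i + 1) ⊔ x' (i + 2)) ⊓ ((Upoly x x' n (i + 1) ⊓ (x i ⊔ x' (i + 2))) ⊔ x' (i + 1))
  else x j ⊓ (Wpoly x x' n i (j + 1) ⊔ x' (j + 1))
  termination_by i - j
  decreasing_by omega

/-- `bigJoin f k = f 0 ⊔ f 1 ⊔ ⋯ ⊔ f k`. -/
def bigJoin (f : ℕ → L) : ℕ → L
  | 0 => f 0
  | k + 1 => bigJoin f k ⊔ f (k + 1)

end Identities

/-- The identity (Hₙ) : `Uₙ = ⋁_{0 ≤ i ≤ n-1} V_{i,n} ∨ ⋁_{0 ≤ i ≤ n-2} W_{i,n}`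
(intended for `n ≥ 1`). -/
def IdH (n : ℕ) (L : Type*) [Lattice L] : Prop :=
  ∀ x x' : ℕ → L,
    Upoly x x' n 0 =
      bigJoin (fun i =>
        if i + 2 ≤ n then Vpoly x x' n i 0 ⊔ Wpoly x x' n i 0 else Vpoly x x' n i 0) (n - 1)

/-- The identity (H_{m,n}) (intended for `m, n ≥ 1`); the common base point is
`x 0 = y 0 = t`. -/
def IdHmn (m n : ℕ) (L : Type*) [Lattice L] : Prop :=
  ∀ x x' y y' : ℕ → L, x 0 = y 0 →
    Upoly x x' m 0 ⊓ Upoly y y' n 0 =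
      bigJoin (fun i =>
          if i + 2 ≤ m then
            (Vpoly x x' m i 0 ⊓ Upoly y y' n 0) ⊔ (Wpoly x x' m i 0 ⊓ Upoly y y' n 0)
          else Vpoly x x' m i 0 ⊓ Upoly y y' n 0) (m - 1)
      ⊔ bigJoin (fun j =>
          if j + 2 ≤ n then
            (Upoly x x' m 0 ⊓ Vpoly y y' n j 0) ⊔ (Upoly x x' m 0 ⊓ Wpoly y y' n j 0)
          else Upoly x x' m 0 ⊓ Vpoly y y' n j 0) (n - 1)
      ⊔ (Upoly x x' m 0 ⊓ Upoly y y' n 0 ⊓ (x 1 ⊔ y' 1) ⊓ (x' 1 ⊔ y 1))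

/-- `p` is join-irreducible: `p = x ⊔ y` implies `p = x` or `p = y`. -/
def JIrr {L : Type*} [Lattice L] (p : L) : Prop :=
  ∀ x y : L, p = x ⊔ y → p = x ∨ p = y

/-- The join-dependency relation `p D q`. -/
def DRel {L : Type*} [Lattice L] (p q : L) : Prop :=
  p ≠ q ∧ ∃ x : L, p ≤ q ⊔ x ∧ ∀ y < q, ¬ p ≤ y ⊔ x

/-- A subset `S` of a lattice `L` is a join-seed. -/
def JoinSeed (L : Type*) [Lattice L] (S : Set L) : Prop :=
  (∀ p ∈ S, JIrr p) ∧
  (∀ a : L, ∃ T ⊆ S, IsLUB T a) ∧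
  (∀ p ∈ S, ∀ a b : L, p ≤ a ⊔ b → ¬ p ≤ a → ¬ p ≤ b →
    ∃ x ∈ S, ∃ y ∈ S, x ≤ a ∧ y ≤ b ∧ p ≤ x ⊔ y ∧
      (∀ x' < x, ¬ p ≤ x' ⊔ y) ∧ (∀ y' < y, ¬ p ≤ x ⊔ y'))

/-- The poset `P_{I,J} = I ∪ {p} ∪ J`, where every element of `I` is below `p`,
`p` is below every element of `J`, every element of `I` is below every element
of `J`, and there are no other strict comparabilities. -/
def PIJ (I J : Type*) : Type _ := I ⊕ (Unit ⊕ J)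

namespace PIJ

variable {I J : Type*}

/-- The rank (height) of an element of `P_{I,J}`. -/
def rank (a : PIJ I J) : ℕ :=
  Sum.elim (fun _ => 0) (Sum.elim (fun _ => 1) fun _ => 2) a

instance : PartialOrder (PIJ I J) where
  le a b := a = b ∨ rank a < rank b
  le_refl a := Or.inl rfl
  le_trans a b c hab hbc := by
    rcases hab with rfl | h
    · exact hbc
    · rcases hbc with rfl | h'
      · exact Or.inr h
      · exact Or.inr (h.trans h')
  le_antisymm a b hab hba := by
    rcases hab with rfl | h
    · rfl
    · rcases hba with rfl | h'
      · rfl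
      · omega

end PIJ

/-- A poset is tree-like if it has no infinite bounded chain and between any two
points there is at most one repetition-free finite path with respect to the
covering relation. -/
def TreeLike (P : Type*) [PartialOrder P] : Prop :=
  (∀ C : Set P, IsChain (· ≤ ·) C → BddAbove C → BddBelow C → C.Finite) ∧
  (∀ a b : P, ∀ l₁ l₂ : List P,
    l₁.Nodup → l₁.head? = some a → l₁.getLast? = some b →
      l₁.Chain' (fun u v => u ⋖ v ∨ v ⋖ u) →
    l₂.Nodup → l₂.head? = some a → l₂.getLast? = some b →
      l₂.Chain' (fun u v => u ⋖ v ∨ v ⋖ u) →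
    l₁ = l₂)

/-- A subset `U` of a poset `P` is `D`-closed. -/
def DClosed {P : Type*} [PartialOrder P] (U : Set P) : Prop :=
  ∀ x p y : P, x < p → p < y → (x ∈ U ∨ y ∈ U) → p ∈ U

/-- A complete congruence of a complete lattice. -/
structure IsCompleteCongr {L : Type*} [CompleteLattice L] (θ : L → L → Prop) : Prop where
  refl : ∀ x, θ x x
  symm : ∀ {x y}, θ x y → θ y x
  trans : ∀ {x y z}, θ x y → θ y z → θ x z
  sup : ∀ {a b c d}, θ a b → θ c d → θ (a ⊔ c) (b ⊔ d)
  inf : ∀ {a b c d}, θ a b → θ c d → θ (a ⊓ c) (b ⊓ d)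
  cSup : ∀ (x : L) (Y : Set L), Y.Nonempty → (∀ y ∈ Y, θ x y) → θ x (sSup Y)
  cInf : ∀ (x : L) (Y : Set L), Y.Nonempty → (∀ y ∈ Y, θ x y) → θ x (sInf Y)

/-- The map `h_U : Co(P) → Co(P ∖ U)`, `X ↦ X ∖ U`. -/
def coRestrict {P : Type*} [PartialOrder P] (U : Set P) (X : Co P) :
    Co {p : P // p ∉ U} :=
  ⟨Subtype.val ⁻¹' X.1, by
    constructor
    rintro a ha b hb z hz
    exact X.2.out ha hb ⟨hz.1, hz.2⟩⟩

/-- The lattice `D(P)` of all `D`-closed subsets of a poset `P`. -/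
def DSub (P : Type*) [PartialOrder P] : Type _ := {U : Set P // DClosed U}

namespace DSub

variable {P : Type*} [PartialOrder P]

instance : PartialOrder (DSub P) := Subtype.partialOrder _

instance : InfSet (DSub P) :=
  ⟨fun S => ⟨⋂ U ∈ S, U.1, by
    intro x p y h1 h2 h3
    simp only [Set.mem_iInter] at h3 ⊢
    intro U hU
    exact U.2 x p y h1 h2 (h3.imp (fun h => h U hU) fun h => h U hU)⟩⟩

noncomputable instance : CompleteLattice (DSub P) :=
  completeLatticeOfInf (DSub P) (by
    intro S
    constructor
    · intro t ht
      exact Set.biInter_subset_of_mem (t := fun U => U.1) ht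
    · intro b hb
      exact Set.subset_iInter₂ fun t ht => hb ht)

end DSub

section CoLemmas
variable {Q : Type*} [PartialOrder Q]

lemma Co.le_iff' {X Y : Co Q} : X ≤ Y ↔ X.1 ⊆ Y.1 := Iff.rfl

lemma Co.coe_inf (X Y : Co Q) : (X ⊓ Y).1 = X.1 ∩ Y.1 := by
  have h1 : X ⊓ Y ≤ X := inf_le_left
  have h2 : X ⊓ Y ≤ Y := inf_le_right
  have h3 : Co.mk' (X.1 ∩ Y.1) (X.2.inter Y.2) ≤ X ⊓ Y := by
    apply le_inf
    · exact fun z hz => hz.1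
    · exact fun z hz => hz.2
  apply Set.Subset.antisymm
  · exact fun z hz => ⟨h1 hz, h2 hz⟩
  · exact h3

/-- The convex hull of the union of two convex sets. -/
def Co.hullSet (X Y : Co Q) : Set Q :=
  {z | ∃ a ∈ X.1 ∪ Y.1, ∃ b ∈ X.1 ∪ Y.1, a ≤ z ∧ z ≤ b}

lemma Co.hullSet_ordConnected (X Y : Co Q) : (Co.hullSet X Y).OrdConnected := by
  constructor
  rintro u ⟨a, ha, b, hb, hau, hub⟩ v ⟨c, hc, d, hd, hcv, hvd⟩ z ⟨hz1, hz2⟩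
  exact ⟨a, ha, d, hd, hau.trans hz1, hz2.trans hvd⟩

lemma Co.coe_sup (X Y : Co Q) : (X ⊔ Y).1 = Co.hullSet X Y := by
  apply Set.Subset.antisymm
  · have h : X ⊔ Y ≤ Co.mk' (Co.hullSet X Y) (Co.hullSet_ordConnected X Y) := by
      apply sup_le
      · exact fun z hz => ⟨z, Or.inl hz, z, Or.inl hz, le_refl z, le_refl z⟩
      · exact fun z hz => ⟨z, Or.inr hz, z, Or.inr hz, le_refl z, le_refl z⟩
    exact h
  · rintro z ⟨a, ha, b, hb, haz, hzb⟩
    have hX : X ≤ X ⊔ Y := le_sup_left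
    have hY : Y ≤ X ⊔ Y := le_sup_right
    have ha' : a ∈ (X ⊔ Y).1 := ha.elim (fun h => hX h) fun h => hY h
    have hb' : b ∈ (X ⊔ Y).1 := hb.elim (fun h => hX h) fun h => hY h
    exact (X ⊔ Y).2.out ha' hb' ⟨haz, hzb⟩

lemma LatticeHom.mono' {L M : Type*} [Lattice L] [Lattice M] (f : LatticeHom L M)
    {x y : L} (h : x ≤ y) : f x ≤ f y := OrderHomClass.mono f h

end CoLemmas
lemma chain_of_family {Q : Type*} [PartialOrder Q] (m : ℕ) (hm3 : 3 ≤ m)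
    (A : ℕ → Set Q) (B : Set Q)
    (hconv : (A (m-1)).OrdConnected)
    (hdisj : ∀ i j, i < m → j < m → i ≠ j → A i ∩ A j ⊆ B)
    (hne : (A (m-2) \ B).Nonempty)
    (hF : ∀ i k, i < k → k < m - 1 → ∀ p ∈ A k \ B, ∃ x ∈ A i \ B, ∃ y ∈ A (m-1) \ B,
        (x < p ∧ p < y) ∨ (y < p ∧ p < x)) :
    ∃ g : ℕ → Q, (∀ t, t < m → g t ∈ A t \ B) ∧
      ((∀ s t, s < t → t < m → g s < g t) ∨ (∀ s t, s < t → t < m → g t < g s)) := by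
  have main : ∀ d, d ≤ m - 3 → ∃ g : ℕ → Q,
      (∀ t, m - 3 - d ≤ t → t < m → g t ∈ A t \ B) ∧
      ((∀ s t, m - 3 - d ≤ s → s < t → t < m → g s < g t) ∨
       (∀ s t, m - 3 - d ≤ s → s < t → t < m → g t < g s)) := by
    intro d
    induction d with
    | zero =>
      intro _
      obtain ⟨p, hp⟩ := hne
      obtain ⟨x, hx, y, hy, hcase⟩ := hF (m-3) (m-2) (by omega) (by omega) p hp
      refine ⟨fun t => if t = m - 2 then p else if t = m - 1 then y else x, ?_, ?_⟩
      · intro t ht1 ht2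
        have h3 : t = m - 3 ∨ t = m - 2 ∨ t = m - 1 := by omega
        rcases h3 with rfl | rfl | rfl
        · dsimp only; rw [if_neg (by omega), if_neg (by omega)]; exact hx
        · dsimp only; rw [if_pos rfl]; exact hp
        · dsimp only; rw [if_neg (by omega), if_pos rfl]; exact hy
      · rcases hcase with ⟨h1, h2⟩ | ⟨h1, h2⟩
        · left
          intro s t hs hst htm
          have hs' : s = m - 3 ∨ s = m - 2 := by omega
          have ht' : t = m - 2 ∨ t = m - 1 := by omega
          rcases hs' with rfl | rfl <;> rcases ht' with rfl | rfl
          · dsimp only; rw [if_neg (by omega), if_neg (by omega), if_pos rfl]; exact h1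
          · dsimp only; rw [if_neg (by omega), if_neg (by omega), if_neg (by omega), if_pos rfl]
            exact h1.trans h2
          · omega
          · dsimp only; rw [if_pos rfl, if_neg (by omega), if_pos rfl]; exact h2
        · right
          intro s t hs hst htm
          have hs' : s = m - 3 ∨ s = m - 2 := by omega
          have ht' : t = m - 2 ∨ t = m - 1 := by omega
          rcases hs' with rfl | rfl <;> rcases ht' with rfl | rfl
          · dsimp only; rw [if_pos rfl, if_neg (by omega), if_neg (by omega)]; exact h2
          · dsimp only; rw [if_neg (by omega), if_pos rfl, if_neg (by omega), if_neg (by omega)]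
            exact h1.trans h2
          · omega
          · dsimp only; rw [if_neg (by omega), if_pos rfl, if_pos rfl]; exact h1
    | succ d ih =>
      intro hd
      obtain ⟨g, hmem, hmono⟩ := ih (by omega)
      set i := m - 3 - (d + 1) with hi
      have hi1 : i + 1 = m - 3 - d := by omega
      have hi1m : i + 1 < m - 1 := by omega
      have hgi : g (i+1) ∈ A (i+1) \ B := hmem (i+1) (by omega) (by omega)
      obtain ⟨x, hx, y, hy, hcase⟩ := hF i (i+1) (by omega) hi1m (g (i+1)) hgi
      have hgm : g (m-1) ∈ A (m-1) \ B := hmem (m-1) (by omega) (by omega)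
      have hmemnew : ∀ t, m - 3 - (d+1) ≤ t → t < m →
          (if t ≤ i then x else g t) ∈ A t \ B := by
        intro t ht1 ht2
        by_cases h : t ≤ i
        · have ht : t = i := by omega
          subst ht
          rw [if_pos h]; exact hx
        · rw [if_neg h]; exact hmem t (by omega) ht2
      rcases hmono with hm1 | hm1
      · -- increasing so far
        rcases hcase with ⟨h1, h2⟩ | ⟨h1, h2⟩
        · refine ⟨fun t => if t ≤ i then x else g t, hmemnew, Or.inl ?_⟩
          intro s t hs hst htm
          by_cases hsi : s ≤ i
          · dsimp only; rw [if_pos hsi, if_neg (by omega)]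
            have ht1 : i + 1 ≤ t := by omega
            rcases eq_or_lt_of_le ht1 with h | h
            · rw [← h]; exact h1
            · exact h1.trans (hm1 (i+1) t (by omega) h htm)
          · dsimp only; rw [if_neg hsi, if_neg (by omega)]
            exact hm1 s t (by omega) hst htm
        · -- contradiction: y < g(i+1) < g(m-1), both ends in A (m-1)
          exfalso
          have hlt : g (i+1) < g (m-1) := hm1 (i+1) (m-1) (by omega) (by omega) (by omega)
          have hmem1 : g (i+1) ∈ A (m-1) := hconv.out hy.1 hgm.1 ⟨h1.le, hlt.le⟩
          exact hgi.2 (hdisj (i+1) (m-1) (by omega) (by omega) (by omega) ⟨hgi.1, hmem1⟩)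
      · -- decreasing so far
        rcases hcase with ⟨h1, h2⟩ | ⟨h1, h2⟩
        · -- contradiction: g(m-1) < g(i+1) < y, both ends in A (m-1)
          exfalso
          have hlt : g (m-1) < g (i+1) := hm1 (i+1) (m-1) (by omega) (by omega) (by omega)
          have hmem1 : g (i+1) ∈ A (m-1) := hconv.out hgm.1 hy.1 ⟨hlt.le, h2.le⟩
          exact hgi.2 (hdisj (i+1) (m-1) (by omega) (by omega) (by omega) ⟨hgi.1, hmem1⟩)
        · refine ⟨fun t => if t ≤ i then x else g t, hmemnew, Or.inr ?_⟩
          intro s t hs hst htm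
          by_cases hsi : s ≤ i
          · dsimp only; rw [if_pos hsi, if_neg (by omega)]
            have ht1 : i + 1 ≤ t := by omega
            rcases eq_or_lt_of_le ht1 with h | h
            · rw [← h]; exact h2
            · exact (hm1 (i+1) t (by omega) h htm).trans h2
          · dsimp only; rw [if_neg hsi, if_neg (by omega)]
            exact hm1 s t (by omega) hst htm
  obtain ⟨g, h1, h2⟩ := main (m-3) le_rfl
  refine ⟨g, fun t ht => h1 t (by omega) ht, ?_⟩
  rcases h2 with h2 | h2
  · exact Or.inl fun s t hst htm => h2 s t (by omega) hst htm
  · exact Or.inr fun s t hst htm => h2 s t (by omega) hst htm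
lemma stmt8_forward (m n : ℕ) (hm : 0 < m) (hn : 0 < n) (P : Type) [PartialOrder P]
    (hlen : lengthLE P n) (f : LatticeHom (Co (Fin m)) (Co P))
    (hinj : Function.Injective f) : m ≤ n + 1 := by
  classical
  by_contra hcon
  push_neg at hcon
  have hm3 : 3 ≤ m := by omega
  -- the singletons
  set e : ℕ → Fin m := fun t => ⟨t % m, Nat.mod_lt t hm⟩ with he
  have heval : ∀ t, t < m → (e t).1 = t := fun t ht => Nat.mod_eq_of_lt ht
  set s : ℕ → Co (Fin m) := fun t => Co.sngl (e t) with hs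
  set A : ℕ → Set P := fun t => (f (s t)).1 with hA
  set B : Set P := (f Co.emp).1 with hB
  have hBsub : ∀ X : Co (Fin m), B ⊆ (f X).1 := by
    intro X
    exact f.mono' (Co.le_iff'.mpr (Set.empty_subset _))
  -- disjointness
  have hdisj : ∀ i j, i < m → j < m → i ≠ j → A i ∩ A j ⊆ B := by
    intro i j hi hj hij
    have hij' : e i ≠ e j := by
      intro h
      have := congrArg Fin.val h
      rw [heval i hi, heval j hj] at this
      exact hij this
    have hins : s i ⊓ s j = Co.emp := by
      apply Subtype.ext
      rw [Co.coe_inf]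
      exact Set.singleton_inter_eq_empty.mpr hij'
    have hmi : f (s i ⊓ s j) = f (s i) ⊓ f (s j) := map_inf f _ _
    have h2 : (f (s i ⊓ s j)).1 = (f (s i) ⊓ f (s j)).1 := congrArg Subtype.val hmi
    intro z hz
    have hz' : z ∈ (f (s i) ⊓ f (s j)).1 := by rw [Co.coe_inf]; exact hz
    rw [← h2, hins] at hz'
    exact hz'
  -- nonemptiness of A (m-2) \ B
  have hne : (A (m-2) \ B).Nonempty := by
    have hsub : B ⊆ A (m-2) := hBsub _
    have hne' : B ≠ A (m-2) := by
      intro h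
      have : Co.emp = s (m-2) := hinj (Subtype.ext h)
      have h2 := congrArg Subtype.val this
      exact (Set.singleton_ne_empty (e (m-2))).symm h2
    have : ¬ A (m-2) ⊆ B := fun h => hne' (Set.Subset.antisymm hsub h)
    exact Set.not_subset.mp this
  -- the key betweenness property
  have hF : ∀ i k, i < k → k < m - 1 → ∀ p ∈ A k \ B, ∃ x ∈ A i \ B, ∃ y ∈ A (m-1) \ B,
      (x < p ∧ p < y) ∨ (y < p ∧ p < x) := by
    intro i k hik hkm1 p hp
    have hkm : k < m := by omega
    have him : i < m := by omega
    have hle : s k ≤ s i ⊔ s (m-1) := by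
      apply Co.le_iff'.mpr
      rw [Co.coe_sup]
      intro z hz
      have hz' : z = e k := hz
      subst hz'
      refine ⟨e i, Or.inl rfl, e (m-1), Or.inr rfl, ?_, ?_⟩
      · show (e i).1 ≤ (e k).1
        rw [heval i him, heval k hkm]; omega
      · show (e k).1 ≤ (e (m-1)).1
        rw [heval k hkm, heval (m-1) (by omega)]; omega
    have hp1 : p ∈ (f (s i) ⊔ f (s (m-1))).1 := by
      have h1 := f.mono' hle hp.1
      have h2 : f (s i ⊔ s (m-1)) = f (s i) ⊔ f (s (m-1)) := map_sup f _ _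
      rw [← h2]
      exact h1
    rw [Co.coe_sup] at hp1
    obtain ⟨a, ha, b, hb, hap, hpb⟩ := hp1
    have hpAi : p ∉ (f (s i)).1 := fun h =>
      hp.2 (hdisj k i hkm him (by omega) ⟨hp.1, h⟩)
    have hpAm : p ∉ (f (s (m-1))).1 := fun h =>
      hp.2 (hdisj k (m-1) hkm (by omega) (by omega) ⟨hp.1, h⟩)
    have hap' : a < p := by
      rcases lt_or_eq_of_le hap with h | h
      · exact h
      · exfalso; subst h; rcases ha with h | h
        · exact hpAi h
        · exact hpAm h
    have hpb' : p < b := by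
      rcases lt_or_eq_of_le hpb with h | h
      · exact h
      · exfalso; subst h; rcases hb with h | h
        · exact hpAi h
        · exact hpAm h
    rcases ha with ha | ha <;> rcases hb with hb | hb
    · exact absurd ((f (s i)).2.out ha hb ⟨hap, hpb⟩) hpAi
    · -- a ∈ A i, b ∈ A (m-1)
      have haB : a ∉ B := by
        intro h
        exact hpAm ((f (s (m-1))).2.out (hBsub _ h) hb ⟨hap, hpb⟩)
      have hbB : b ∉ B := by
        intro h
        exact hpAi ((f (s i)).2.out ha (hBsub _ h) ⟨hap, hpb⟩)
      exact ⟨a, ⟨ha, haB⟩, b, ⟨hb, hbB⟩, Or.inl ⟨hap', hpb'⟩⟩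
    · -- a ∈ A (m-1), b ∈ A i
      have haB : a ∉ B := by
        intro h
        exact hpAi ((f (s i)).2.out (hBsub _ h) hb ⟨hap, hpb⟩)
      have hbB : b ∉ B := by
        intro h
        exact hpAm ((f (s (m-1))).2.out ha (hBsub _ h) ⟨hap, hpb⟩)
      exact ⟨b, ⟨hb, hbB⟩, a, ⟨ha, haB⟩, Or.inr ⟨hap', hpb'⟩⟩
    · exact absurd ((f (s (m-1))).2.out ha hb ⟨hap, hpb⟩) hpAm
  -- extract a chain of m elements
  obtain ⟨g, hgmem, hgmono⟩ :=
    chain_of_family m hm3 A B (f (s (m-1))).2 hdisj hne hF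
  have hcomp : ∀ u v, u < m → v < m → u ≠ v → g u < g v ∨ g v < g u := by
    intro u v hu hv huv
    rcases Nat.lt_or_ge u v with h | h
    · rcases hgmono with hmono | hmono
      · exact Or.inl (hmono u v h hv)
      · exact Or.inr (hmono u v h hv)
    · have h' : v < u := by omega
      rcases hgmono with hmono | hmono
      · exact Or.inr (hmono v u h' hu)
      · exact Or.inl (hmono v u h' hu)
  have hginj : Set.InjOn g (Finset.range m : Set ℕ) := by
    intro u hu v hv huv
    simp only [Finset.coe_range, Set.mem_Iio] at hu hv
    by_contra hne'
    rcases hcomp u v hu hv hne' with h | h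
    · exact absurd huv (ne_of_lt h)
    · exact absurd huv.symm (ne_of_lt h)
  set C : Finset P := (Finset.range m).image g with hC
  have hchain : IsChain (· ≤ ·) (C : Set P) := by
    intro a ha b hb hab
    simp only [hC, Finset.coe_image, Finset.coe_range, Set.mem_image, Set.mem_Iio] at ha hb
    obtain ⟨u, hu, rfl⟩ := ha
    obtain ⟨v, hv, rfl⟩ := hb
    have huv : u ≠ v := fun h => hab (by rw [h])
    rcases hcomp u v hu hv huv with h | h
    · exact Or.inl h.le
    · exact Or.inr h.le
  have hcard : C.card = m := by
    rw [hC, Finset.card_image_of_injOn hginj, Finset.card_range]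
  have := hlen C hchain
  omega
theorem stmt8 (m n : ℕ) (hm : 0 < m) (hn : 0 < n) :
    ((∃ (P : Type) (_ : PartialOrder P), lengthLE P n ∧
        ∃ f : LatticeHom (Co (Fin m)) (Co P), Function.Injective f) ↔ m ≤ n + 1) ∧
    (∃ (L : Type) (_ : Lattice L),
      (∃ (P : Type) (_ : PartialOrder P), lengthLE P (n + 1) ∧
        ∃ f : LatticeHom L (Co P), Function.Injective f) ∧
      ¬ (∃ (P : Type) (_ : PartialOrder P), lengthLE P n ∧
        ∃ f : LatticeHom L (Co P), Function.Injective f)) := by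
  constructor
  · constructor
    · rintro ⟨P, instP, hlen, f, hinj⟩
      exact @stmt8_forward m n hm hn P instP hlen f hinj
    · intro hmn
      refine ⟨Fin m, inferInstance, ?_, LatticeHom.id _, fun a b h => h⟩
      intro C _
      calc C.card ≤ (Finset.univ : Finset (Fin m)).card :=
            Finset.card_le_card (Finset.subset_univ C)
        _ = m := Finset.card_fin m
        _ ≤ n + 1 := hmn
  · refine ⟨Co (Fin (n+2)), inferInstance,
      ⟨Fin (n+2), inferInstance, ?_, LatticeHom.id _, fun a b h => h⟩, ?_⟩
    · intro C _
      calc C.card ≤ (Finset.univ : Finset (Fin (n+2))).card :=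
            Finset.card_le_card (Finset.subset_univ C)
        _ = n + 2 := Finset.card_fin _
    · rintro ⟨P, instP, hlen, f, hinj⟩
      have := @stmt8_forward (n+2) n (by omega) hn P instP hlen f hinj
      omega
end

section
/- If L is a dually 2-distributive, complete, lower continuous, finitely spatial lattice, then the set J(L) of all join-irreducible elements of L is a join-seed of L. -/
/-! Common definitions: lattices of order-convex subsets of a poset,
length of a poset, the identities (S), (U), (B), (L2), (H_n), (H_{m,n}),
join-irreducibility, the join-dependency relation, join-seeds,
the posets P_{I,J}, tree-like posets, D-closed sets,
and complete lattice congruences. -/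

open Set

/-- Minimization lemma via Zorn + lower continuity. -/
lemma exists_min_aux {L : Type*} [CompleteLattice L]
    (hlc : ∀ (a : L) (D : Set L), D.Nonempty → DirectedOn (· ≥ ·) D →
      a ⊔ sInf D = ⨅ d ∈ D, a ⊔ d)
    (p b a₀ : L) (h : p ≤ a₀ ⊔ b) :
    ∃ x ≤ a₀, p ≤ x ⊔ b ∧ ∀ x' < x, ¬ p ≤ x' ⊔ b := by
  set A : Set L := {x | x ≤ a₀ ∧ p ≤ x ⊔ b} with hA
  have key : ∀ c ⊆ A, IsChain (· ≥ ·) c → ∀ y ∈ c, ∃ lb ∈ A, ∀ z ∈ c, lb ≤ z := by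
    intro c hc hchain y hy
    refine ⟨sInf c, ⟨(sInf_le hy).trans (hc hy).1, ?_⟩, fun z hz => sInf_le hz⟩
    have hdir : DirectedOn (· ≥ ·) c := by
      intro u hu v hv
      rcases hchain.total hu hv with h' | h'
      · exact ⟨v, hv, h', le_refl v⟩
      · exact ⟨u, hu, le_refl u, h'⟩
    have := hlc b c ⟨y, hy⟩ hdir
    have hpc : p ≤ ⨅ d ∈ c, b ⊔ d := by
      refine le_iInf₂ fun d hd => ?_
      exact le_trans (hc hd).2 (sup_le le_sup_right le_sup_left)
    calc p ≤ b ⊔ sInf c := this ▸ hpc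
    _ ≤ sInf c ⊔ b := sup_comm b (sInf c) ▸ le_refl _
  obtain ⟨m, hm1, hm2⟩ := zorn_le_nonempty₀ (α := Lᵒᵈ) A key a₀ ⟨le_refl _, h⟩
  refine ⟨m, hm2.1.1, hm2.1.2, fun x' hx' hpx' => ?_⟩
  have : x' ∈ A := ⟨hx'.le.trans hm2.1.1, hpx'⟩
  exact absurd (hm2.2 this hx'.le) hx'.not_ge


theorem stmt11 (L : Type*) [CompleteLattice L]
    (h2 : ∀ a x y z : L,
      a ⊓ (x ⊔ y ⊔ z) = (a ⊓ (x ⊔ y)) ⊔ (a ⊓ (x ⊔ z)) ⊔ (a ⊓ (y ⊔ z)))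
    (hlc : ∀ (a : L) (D : Set L), D.Nonempty → DirectedOn (· ≥ ·) D →
      a ⊔ sInf D = ⨅ d ∈ D, a ⊔ d)
    (hfs : ∀ a : L, a = sSup {p : L | JIrr p ∧ p ≤ a}) :
    JoinSeed L {p : L | JIrr p} := by
  refine ⟨fun p hp => hp, fun a => ?_, ?_⟩
  · refine ⟨{p : L | JIrr p ∧ p ≤ a}, fun q hq => hq.1, ?_⟩
    have := isLUB_sSup {p : L | JIrr p ∧ p ≤ a}
    rwa [← hfs a] at this
  · intro p hp a b hpab hpa hpb
    -- three-fold join-irreducibility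
    have hp3 : ∀ A B C : L, p = A ⊔ B ⊔ C → p = A ∨ p = B ∨ p = C := by
      intro A B C h
      rcases hp _ _ h with h' | h'
      · rcases hp _ _ h' with h'' | h''
        · exact Or.inl h''
        · exact Or.inr (Or.inl h'')
      · exact Or.inr (Or.inr h')
    -- minimize x
    obtain ⟨x₁, hx₁a, hpx₁, hx₁min⟩ := exists_min_aux hlc p b a hpab
    -- minimize y
    have hpx₁b : p ≤ b ⊔ x₁ := le_trans hpx₁ (by rw [sup_comm])
    obtain ⟨y, hyb, hpy', hymin'⟩ := exists_min_aux hlc p x₁ b hpx₁b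
    have hpy : p ≤ x₁ ⊔ y := le_trans hpy' (by rw [sup_comm])
    -- re-minimize x
    obtain ⟨x, hxx₁, hpxy', hxmin'⟩ := exists_min_aux hlc p y x₁ hpy
    have hxa : x ≤ a := hxx₁.trans hx₁a
    have hpxy : p ≤ x ⊔ y := hpxy'
    have hymin : ∀ y' < y, ¬ p ≤ x ⊔ y' := by
      intro y' hy' hle
      exact hymin' y' hy' (le_trans hle (sup_le (hxx₁.trans le_sup_right) le_sup_left))
    have hxmin : ∀ x' < x, ¬ p ≤ x' ⊔ y := hxmin'
    -- x is join-irreducible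
    have hxirr : JIrr x := by
      intro u v huv
      by_contra hcon
      push_neg at hcon
      obtain ⟨hu, hv⟩ := hcon
      have hux : u < x := lt_of_le_of_ne (huv ▸ le_sup_left) (Ne.symm hu)
      have hvx : v < x := lt_of_le_of_ne (huv ▸ le_sup_right) (Ne.symm hv)
      have : p = (p ⊓ (u ⊔ v)) ⊔ (p ⊓ (u ⊔ y)) ⊔ (p ⊓ (v ⊔ y)) := by
        have hle : p ≤ u ⊔ v ⊔ y := by rw [← huv]; exact hpxy
        have := h2 p u v y
        rwa [inf_eq_left.mpr hle] at this
      rcases hp3 _ _ _ this with h' | h' | h'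
      · exact hpa (le_trans (h' ▸ inf_le_right) (huv ▸ hxa))
      · exact hxmin u hux (h' ▸ inf_le_right)
      · exact hxmin v hvx (h' ▸ inf_le_right)
    have hyirr : JIrr y := by
      intro u v huv
      by_contra hcon
      push_neg at hcon
      obtain ⟨hu, hv⟩ := hcon
      have huy : u < y := lt_of_le_of_ne (huv ▸ le_sup_left) (Ne.symm hu)
      have hvy : v < y := lt_of_le_of_ne (huv ▸ le_sup_right) (Ne.symm hv)
      have : p = (p ⊓ (u ⊔ v)) ⊔ (p ⊓ (u ⊔ x)) ⊔ (p ⊓ (v ⊔ x)) := by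
        have hle : p ≤ u ⊔ v ⊔ x := by
          rw [sup_comm (u ⊔ v) x, ← huv]; exact hpxy
        have := h2 p u v x
        rwa [inf_eq_left.mpr hle] at this
      rcases hp3 _ _ _ this with h' | h' | h'
      · exact hpb (le_trans (h' ▸ inf_le_right) (huv ▸ hyb))
      · exact hymin u huy (by rw [sup_comm]; exact h' ▸ inf_le_right)
      · exact hymin v hvy (by rw [sup_comm]; exact h' ▸ inf_le_right)
    exact ⟨x, hxirr, y, hyirr, hxa, hyb, hpxy, hxmin, hymin⟩
end

section
/- For every poset P, the lattice Co(P) satisfies the identity (L2) if and only if lh(P) ≤ 2. -/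
/-! Common definitions: lattices of order-convex subsets of a poset,
length of a poset, the identities (S), (U), (B), (L2), (H_n), (H_{m,n}),
join-irreducibility, the join-dependency relation, join-seeds,
the posets P_{I,J}, tree-like posets, D-closed sets,
and complete lattice congruences. -/

open Set

section Aux

variable {P : Type*} [PartialOrder P]

lemma Co_le_iff (a b : Co P) : a ≤ b ↔ a.1 ⊆ b.1 := Iff.rfl

lemma Co_inf_coe (a b : Co P) : (a ⊓ b).1 = a.1 ∩ b.1 := by
  apply Set.Subset.antisymm
  · exact Set.subset_inter ((Co_le_iff _ _).1 inf_le_left) ((Co_le_iff _ _).1 inf_le_right)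
  · have h : Co.mk' (a.1 ∩ b.1) (a.2.inter b.2) ≤ a ⊓ b :=
      le_inf (Set.inter_subset_left) (Set.inter_subset_right)
    exact (Co_le_iff _ _).1 h

lemma Co_sup_coe (a b : Co P) :
    (a ⊔ b).1 = {z | ∃ x ∈ a.1 ∪ b.1, ∃ y ∈ a.1 ∪ b.1, x ≤ z ∧ z ≤ y} := by
  have hconv : ({z | ∃ x ∈ a.1 ∪ b.1, ∃ y ∈ a.1 ∪ b.1, x ≤ z ∧ z ≤ y} : Set P).OrdConnected := by
    constructor
    rintro u ⟨x, hx, y, hy, hxu, huy⟩ v ⟨x', hx', y', hy', hx'v, hvy'⟩ w hw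
    exact ⟨x, hx, y', hy', hxu.trans hw.1, hw.2.trans hvy'⟩
  apply Set.Subset.antisymm
  · have h1 : a ⊔ b ≤ Co.mk' _ hconv := by
      apply sup_le
      · rw [Co_le_iff]; intro z hz; exact ⟨z, Or.inl hz, z, Or.inl hz, le_rfl, le_rfl⟩
      · rw [Co_le_iff]; intro z hz; exact ⟨z, Or.inr hz, z, Or.inr hz, le_rfl, le_rfl⟩
    exact (Co_le_iff _ _).1 h1
  · rintro z ⟨x, hx, y, hy, hxz, hzy⟩
    have hx' : x ∈ (a ⊔ b).1 :=
      hx.elim (fun h => (Co_le_iff a (a ⊔ b)).1 le_sup_left h)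
        (fun h => (Co_le_iff b (a ⊔ b)).1 le_sup_right h)
    have hy' : y ∈ (a ⊔ b).1 :=
      hy.elim (fun h => (Co_le_iff a (a ⊔ b)).1 le_sup_left h)
        (fun h => (Co_le_iff b (a ⊔ b)).1 le_sup_right h)
    exact (a ⊔ b).2.out hx' hy' ⟨hxz, hzy⟩

lemma no4chain (h : lengthLE P 2) {w x y z : P}
    (h1 : w < x) (h2 : x < y) (h3 : y < z) : False := by
  have h12 : w < y := h1.trans h2
  have h13 : w < z := h12.trans h3
  have h23 : x < z := h2.trans h3
  classical
  have hC : IsChain (· ≤ ·) (({w, x, y, z} : Finset P) : Set P) := by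
    intro u hu v hv hne
    simp only [Finset.coe_insert, Set.mem_insert_iff, Finset.coe_singleton,
      Set.mem_singleton_iff] at hu hv
    rcases hu with rfl | rfl | rfl | rfl <;> rcases hv with rfl | rfl | rfl | rfl <;>
      first
        | exact absurd rfl hne
        | exact Or.inl h1.le
        | exact Or.inl h2.le
        | exact Or.inl h3.le
        | exact Or.inl h12.le
        | exact Or.inl h13.le
        | exact Or.inl h23.le
        | exact Or.inr h1.le
        | exact Or.inr h2.le
        | exact Or.inr h3.le
        | exact Or.inr h12.le
        | exact Or.inr h13.le
        | exact Or.inr h23.le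
  have hw : w ∉ ({x, y, z} : Finset P) := by simp [h1.ne, h12.ne, h13.ne]
  have hx : x ∉ ({y, z} : Finset P) := by simp [h2.ne, h23.ne]
  have hy : y ∉ ({z} : Finset P) := by simp [h3.ne]
  have hcard : ({w, x, y, z} : Finset P).card = 4 := by
    rw [Finset.card_insert_of_notMem hw, Finset.card_insert_of_notMem hx,
      Finset.card_insert_of_notMem hy, Finset.card_singleton]
  have := h _ hC
  omega

lemma exists_chain_list (n : ℕ) (C : Finset P) (hC : IsChain (· ≤ ·) (C : Set P))
    (hn : n ≤ C.card) : ∃ l : List P, l.Chain' (· < ·) ∧ l.length = n ∧ ∀ x ∈ l, x ∈ C := by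
  classical
  induction n generalizing C with
  | zero => exact ⟨[], List.isChain_nil, rfl, by simp⟩
  | succ n ih =>
    have hne : C.Nonempty := Finset.card_pos.1 (by omega)
    obtain ⟨m, hm, hmin⟩ := C.exists_minimal hne
    have hsub : ((C.erase m : Finset P) : Set P) ⊆ (C : Set P) := by
      intro x hx; exact Finset.mem_coe.2 (Finset.mem_of_mem_erase (Finset.mem_coe.1 hx))
    obtain ⟨l, hl, hlen, hmem⟩ := ih (C.erase m) (hC.mono hsub)
      (by rw [Finset.card_erase_of_mem hm]; omega)
    have hlt : ∀ x ∈ C.erase m, m < x := by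
      intro x hx
      have hxC := Finset.mem_of_mem_erase hx
      have hxm : x ≠ m := Finset.ne_of_mem_erase hx
      rcases hC (Finset.mem_coe.2 hxC) (Finset.mem_coe.2 hm) hxm with h | h
      · exact absurd (hmin hxC h) (lt_of_le_of_ne h hxm).not_ge
      · exact lt_of_le_of_ne h hxm.symm
    refine ⟨m :: l, ?_, by simp [hlen], ?_⟩
    · simp only [List.Chain', List.isChain_cons]
      refine ⟨?_, hl⟩
      intro y hy
      exact hlt y (hmem y (List.mem_of_mem_head? hy))
    · intro x hx
      rcases List.mem_cons.1 hx with rfl | hx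
      · exact hm
      · exact Finset.mem_of_mem_erase (hmem x hx)

end Aux

theorem stmt13 (P : Type*) [PartialOrder P] : IdL2 (Co P) ↔ lengthLE P 2 := by
  constructor
  · -- IdL2 → length ≤ 2
    intro hId
    by_contra hlen
    simp only [lengthLE, not_forall] at hlen
    obtain ⟨C, hC, hcard⟩ := hlen
    obtain ⟨l, hchain, hlen4, _⟩ := exists_chain_list 4 C hC (by omega)
    match l, hlen4, hchain with
    | [p0, p1, p2, p3], _, hchain =>
    simp only [List.Chain', List.isChain_cons_cons, List.isChain_singleton, and_true] at hchain
    obtain ⟨h01, h12, h23⟩ := hchain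
    -- the counterexample: a = [p0,p1], b = {p2}, b' = c = {p0}, c' = {p3}
    have E := hId (Co.mk' (Set.Icc p0 p1) Set.ordConnected_Icc) (Co.sngl p2)
      (Co.sngl p0) (Co.sngl p0) (Co.sngl p3)
    set a : Co P := Co.mk' (Set.Icc p0 p1) Set.ordConnected_Icc with ha
    set b : Co P := Co.sngl p2 with hb
    set s0 : Co P := Co.sngl p0 with hs0
    set c' : Co P := Co.sngl p3 with hc'
    -- p1 is in the LHS
    have hmem : p1 ∈ (a ⊓ ((b ⊓ (s0 ⊔ c')) ⊔ s0)).1 := by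
      rw [Co_inf_coe]
      constructor
      · exact ⟨h01.le, le_rfl⟩
      · rw [Co_sup_coe]
        refine ⟨p0, Or.inr rfl, p2, Or.inl ?_, h01.le, h12.le⟩
        rw [Co_inf_coe]
        refine ⟨rfl, ?_⟩
        rw [Co_sup_coe]
        exact ⟨p0, Or.inl rfl, p3, Or.inr rfl, (h01.trans h12).le, h23.le⟩
    rw [E] at hmem
    -- but the RHS is contained in {p0}
    have hJ1 : a ⊓ b ⊓ (s0 ⊔ c') ≤ s0 := by
      rw [Co_le_iff]
      intro w hw
      exfalso
      have hw' : w ∈ (a ⊓ b).1 := (Co_le_iff _ _).1 inf_le_left hw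
      rw [Co_inf_coe] at hw'
      obtain ⟨hwa, hwb⟩ := hw'
      have hwp2 : w = p2 := hwb
      subst hwp2
      exact absurd hwa.2 h12.not_ge
    have hbc : b ⊓ s0 ≤ s0 := inf_le_right
    have hbc' : b ⊓ c' ≤ s0 := by
      rw [Co_le_iff]
      intro w hw
      exfalso
      rw [Co_inf_coe] at hw
      have e2 : w = p2 := hw.1
      have e3 : w = p3 := hw.2
      exact h23.ne (e2 ▸ e3)
    have hJ2 : a ⊓ ((b ⊓ s0) ⊔ s0) ≤ s0 :=
      inf_le_right.trans (sup_le hbc le_rfl)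
    have hJ3 : a ⊓ ((b ⊓ c') ⊔ s0) ≤ s0 :=
      inf_le_right.trans (sup_le hbc' le_rfl)
    have hall : (a ⊓ b ⊓ (s0 ⊔ c')) ⊔ (a ⊓ ((b ⊓ s0) ⊔ s0)) ⊔ (a ⊓ ((b ⊓ c') ⊔ s0)) ≤ s0 :=
      sup_le (sup_le hJ1 hJ2) hJ3
    have hps : p1 ∈ s0.1 := (Co_le_iff _ _).1 hall hmem
    have : p1 = p0 := hps
    exact h01.ne' this
  · -- length ≤ 2 → IdL2
    intro hlen a b b' c c'
    apply le_antisymm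
    · -- hard direction: LHS ⊆ RHS
      have hJ1le : a ⊓ b ⊓ (c ⊔ c') ≤
          (a ⊓ b ⊓ (c ⊔ c')) ⊔ (a ⊓ ((b ⊓ c) ⊔ b')) ⊔ (a ⊓ ((b ⊓ c') ⊔ b')) :=
        le_sup_left.trans le_sup_left
      have hJ2le : a ⊓ ((b ⊓ c) ⊔ b') ≤
          (a ⊓ b ⊓ (c ⊔ c')) ⊔ (a ⊓ ((b ⊓ c) ⊔ b')) ⊔ (a ⊓ ((b ⊓ c') ⊔ b')) :=
        le_sup_right.trans le_sup_left
      have hJ3le : a ⊓ ((b ⊓ c') ⊔ b') ≤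
          (a ⊓ b ⊓ (c ⊔ c')) ⊔ (a ⊓ ((b ⊓ c) ⊔ b')) ⊔ (a ⊓ ((b ⊓ c') ⊔ b')) :=
        le_sup_right
      rw [Co_le_iff]
      intro z hz
      rw [Co_inf_coe] at hz
      obtain ⟨hza, hzs⟩ := hz
      rw [Co_sup_coe] at hzs
      obtain ⟨u, hu, v, hv, huz, hzv⟩ := hzs
      -- helpers producing membership in the RHS
      have mkJ1 : z ∈ b.1 → z ∈ (c ⊔ c').1 →
          z ∈ ((a ⊓ b ⊓ (c ⊔ c')) ⊔ (a ⊓ ((b ⊓ c) ⊔ b')) ⊔ (a ⊓ ((b ⊓ c') ⊔ b'))).1 := by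
        intro h1 h2
        apply (Co_le_iff _ _).1 hJ1le
        rw [Co_inf_coe, Co_inf_coe]
        exact ⟨⟨hza, h1⟩, h2⟩
      have mkJ2 : ∀ w₁ w₂ : P, w₁ ∈ (b ⊓ c).1 ∪ b'.1 → w₂ ∈ (b ⊓ c).1 ∪ b'.1 →
          w₁ ≤ z → z ≤ w₂ →
          z ∈ ((a ⊓ b ⊓ (c ⊔ c')) ⊔ (a ⊓ ((b ⊓ c) ⊔ b')) ⊔ (a ⊓ ((b ⊓ c') ⊔ b'))).1 := by
        intro w₁ w₂ hw₁ hw₂ h1 h2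
        apply (Co_le_iff _ _).1 hJ2le
        rw [Co_inf_coe]
        refine ⟨hza, ?_⟩
        rw [Co_sup_coe]
        exact ⟨w₁, hw₁, w₂, hw₂, h1, h2⟩
      have mkJ3 : ∀ w₁ w₂ : P, w₁ ∈ (b ⊓ c').1 ∪ b'.1 → w₂ ∈ (b ⊓ c').1 ∪ b'.1 →
          w₁ ≤ z → z ≤ w₂ →
          z ∈ ((a ⊓ b ⊓ (c ⊔ c')) ⊔ (a ⊓ ((b ⊓ c) ⊔ b')) ⊔ (a ⊓ ((b ⊓ c') ⊔ b'))).1 := by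
        intro w₁ w₂ hw₁ hw₂ h1 h2
        apply (Co_le_iff _ _).1 hJ3le
        rw [Co_inf_coe]
        refine ⟨hza, ?_⟩
        rw [Co_sup_coe]
        exact ⟨w₁, hw₁, w₂, hw₂, h1, h2⟩
      rcases hu with huX | hub
      · rw [Co_inf_coe] at huX
        obtain ⟨hub, hucc⟩ := huX
        rcases hv with hvX | hvb
        · -- both u, v in b ⊓ (c ⊔ c')
          rw [Co_inf_coe] at hvX
          exact mkJ1 (b.2.out hub hvX.1 ⟨huz, hzv⟩) ((c ⊔ c').2.out hucc hvX.2 ⟨huz, hzv⟩)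
        · -- u ∈ b ⊓ (c ⊔ c'), v ∈ b'
          rcases eq_or_lt_of_le huz with rfl | hult
          · exact mkJ1 hub hucc
          rcases eq_or_lt_of_le hzv with rfl | hzlt
          · exact mkJ2 z z (Or.inr hvb) (Or.inr hvb) le_rfl le_rfl
          · rw [Co_sup_coe] at hucc
            obtain ⟨s, hs, t, ht, hsu, hut⟩ := hucc
            rcases eq_or_lt_of_le hsu with rfl | hslt
            · rcases hs with huc | huc'
              · refine mkJ2 s v (Or.inl ?_) (Or.inr hvb) hult.le hzlt.le
                rw [Co_inf_coe]; exact ⟨hub, huc⟩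
              · refine mkJ3 s v (Or.inl ?_) (Or.inr hvb) hult.le hzlt.le
                rw [Co_inf_coe]; exact ⟨hub, huc'⟩
            · exact (no4chain hlen hslt hult hzlt).elim
      · rcases hv with hvX | hvb
        · -- u ∈ b', v ∈ b ⊓ (c ⊔ c')
          rw [Co_inf_coe] at hvX
          obtain ⟨hvb, hvcc⟩ := hvX
          rcases eq_or_lt_of_le hzv with rfl | hzlt
          · exact mkJ1 hvb hvcc
          rcases eq_or_lt_of_le huz with rfl | hult
          · exact mkJ2 u u (Or.inr hub) (Or.inr hub) le_rfl le_rfl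
          · rw [Co_sup_coe] at hvcc
            obtain ⟨s, hs, t, ht, hsv, hvt⟩ := hvcc
            rcases eq_or_lt_of_le hvt with heq | hvlt
            · rcases heq.symm ▸ ht with hvc | hvc'
              · refine mkJ2 u v (Or.inr hub) (Or.inl ?_) hult.le hzlt.le
                rw [Co_inf_coe]; exact ⟨hvb, hvc⟩
              · refine mkJ3 u v (Or.inr hub) (Or.inl ?_) hult.le hzlt.le
                rw [Co_inf_coe]; exact ⟨hvb, hvc'⟩
            · exact (no4chain hlen hult hzlt hvlt).elim
        · -- both in b'
          exact mkJ2 z z (Or.inr (b'.2.out hub hvb ⟨huz, hzv⟩))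
            (Or.inr (b'.2.out hub hvb ⟨huz, hzv⟩)) le_rfl le_rfl
    · -- easy direction: RHS ⊆ LHS
      apply sup_le (sup_le ?_ ?_) ?_
      · exact le_inf (inf_le_left.trans inf_le_left)
          ((le_inf (inf_le_left.trans inf_le_right) inf_le_right).trans le_sup_left)
      · exact inf_le_inf_left a (sup_le_sup_right (inf_le_inf_left b le_sup_left) b')
      · exact inf_le_inf_left a (sup_le_sup_right (inf_le_inf_left b le_sup_right) b')
end

section
/- Let P be a poset and let U be a D-closed subset of P. Then the binary relation θ_U on Co(P), defined by X ≡ Y (mod θ_U) iff X ∪ U = Y ∪ U, is a complete lattice congruence on Co(P), and the map h_U : Co(P) → Co(P ∖ U) (where P ∖ U carries the induced order) given by h_U(X) = X ∖ U is a surjective lattice homomorphism whose kernel is θ_U. Moreover, every complete lattice congruence θ of Co(P) equals θ_U for the D-closed set U = {p ∈ P : {p} ≡ ∅ (mod θ)}. -/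
/-! Common definitions: lattices of order-convex subsets of a poset,
length of a poset, the identities (S), (U), (B), (L2), (H_n), (H_{m,n}),
join-irreducibility, the join-dependency relation, join-seeds,
the posets P_{I,J}, tree-like posets, D-closed sets,
and complete lattice congruences. -/

open Set

namespace Stmt14Aux

open Set

variable {P : Type*} [PartialOrder P]

def hull (S : Set P) : Set P := {z | ∃ x ∈ S, ∃ y ∈ S, x ≤ z ∧ z ≤ y}

lemma hull_ordConnected (S : Set P) : (hull S).OrdConnected := by
  constructor
  rintro a ⟨x, hx, y, hy, hxa, _⟩ b ⟨x', hx', y', hy', _, hby'⟩ z hz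
  exact ⟨x, hx, y', hy', hxa.trans hz.1, hz.2.trans hby'⟩

lemma subset_hull (S : Set P) : S ⊆ hull S := fun z hz => ⟨z, hz, z, hz, le_refl z, le_refl z⟩

lemma Co_le_iff {X Y : Co P} : X ≤ Y ↔ X.1 ⊆ Y.1 := Iff.rfl

lemma sInf_coe (S : Set (Co P)) : (sInf S).1 = ⋂ s ∈ S, s.1 := rfl

lemma inf_coe (X Y : Co P) : (X ⊓ Y).1 = X.1 ∩ Y.1 := by
  have h : X ⊓ Y = sInf {X, Y} := sInf_pair.symm
  rw [h, sInf_coe]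
  simp

lemma sSup_coe (S : Set (Co P)) : (sSup S).1 = hull (⋃ s ∈ S, s.1) := by
  have h1 : sSup S ≤ ⟨hull (⋃ s ∈ S, s.1), hull_ordConnected _⟩ :=
    sSup_le fun s hs => Co_le_iff.mpr ((subset_biUnion_of_mem hs).trans (subset_hull _))
  have h2 : (⟨hull (⋃ s ∈ S, s.1), hull_ordConnected _⟩ : Co P) ≤ sSup S := by
    rintro z ⟨x, hx, y, hy, hxz, hzy⟩
    simp only [mem_iUnion] at hx hy
    obtain ⟨s, hs, hxs⟩ := hx
    obtain ⟨t, ht, hyt⟩ := hy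
    exact (sSup S).2.out (Co_le_iff.mp (le_sSup hs) hxs) (Co_le_iff.mp (le_sSup ht) hyt) ⟨hxz, hzy⟩
  exact congrArg Subtype.val (le_antisymm h1 h2)

lemma sup_coe (X Y : Co P) : (X ⊔ Y).1 = hull (X.1 ∪ Y.1) := by
  rw [← sSup_pair, sSup_coe]
  simp

end Stmt14Aux
namespace Stmt14Aux

variable {P : Type*} [PartialOrder P]

lemma coRestrict_coe (U : Set P) (X : Co P) :
    (coRestrict U X).1 = Subtype.val ⁻¹' X.1 := rfl

lemma key5 (U : Set P) (X Y : Co P) :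
    X.1 ∪ U = Y.1 ∪ U ↔ coRestrict U X = coRestrict U Y := by
  constructor
  · intro h
    apply Subtype.ext
    ext ⟨p, hp⟩
    simp only [coRestrict_coe, mem_preimage]
    constructor
    · intro hx
      have h2 : p ∈ Y.1 ∪ U := h ▸ (Or.inl hx : p ∈ X.1 ∪ U)
      exact h2.resolve_right hp
    · intro hy
      have h2 : p ∈ X.1 ∪ U := h.symm ▸ (Or.inl hy : p ∈ Y.1 ∪ U)
      exact h2.resolve_right hp
  · intro h
    have hs : Subtype.val ⁻¹' X.1 = Subtype.val ⁻¹' Y.1 := congrArg Subtype.val h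
    ext p
    by_cases hp : p ∈ U
    · simp [hp]
    · have h2 := Set.ext_iff.mp hs ⟨p, hp⟩
      simp only [mem_preimage] at h2
      simp [hp, h2]

lemma restrict_sInf (U : Set P) (S : Set (Co P)) :
    coRestrict U (sInf S) = sInf (coRestrict U '' S) := by
  apply Subtype.ext
  rw [coRestrict_coe, sInf_coe, sInf_coe]
  ext q
  simp [coRestrict_coe]

lemma restrict_sSup (U : Set P) (hU : DClosed U) (S : Set (Co P)) :
    coRestrict U (sSup S) = sSup (coRestrict U '' S) := by
  apply Subtype.ext
  rw [coRestrict_coe, sSup_coe, sSup_coe]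
  have himg : (⋃ v ∈ coRestrict U '' S, v.1) = ⋃ s ∈ S, Subtype.val ⁻¹' s.1 := by
    rw [Set.biUnion_image]; rfl
  rw [himg]
  ext ⟨p, hp⟩
  constructor
  · rintro ⟨x, hx, y, hy, hxp, hpy⟩
    by_cases hxU : x ∈ U
    · have hxp' : x < p := lt_of_le_of_ne hxp (fun e => hp (e ▸ hxU))
      have hpy' : p = y := by
        by_contra hne
        exact hp (hU x p y hxp' (lt_of_le_of_ne hpy hne) (Or.inl hxU))
      subst hpy'
      exact subset_hull _ (by simpa using hy)
    · by_cases hyU : y ∈ U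
      · have hpy' : p < y := lt_of_le_of_ne hpy (fun e => hp (e ▸ hyU))
        have hxp' : p = x := by
          by_contra hne
          exact hp (hU x p y (lt_of_le_of_ne hxp (fun e => hne e.symm)) hpy' (Or.inr hyU))
        subst hxp'
        exact subset_hull _ (by simpa using hx)
      · simp only [mem_iUnion] at hx hy
        obtain ⟨s, hs, hxs⟩ := hx
        obtain ⟨t, ht, hyt⟩ := hy
        refine ⟨⟨x, hxU⟩, ?_, ⟨y, hyU⟩, ?_, hxp, hpy⟩
        · simp only [mem_iUnion, mem_preimage]; exact ⟨s, hs, hxs⟩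
        · simp only [mem_iUnion, mem_preimage]; exact ⟨t, ht, hyt⟩
  · rintro ⟨a, ha, b, hb, hap, hpb⟩
    simp only [mem_iUnion, mem_preimage] at ha hb
    obtain ⟨s, hs, has⟩ := ha
    obtain ⟨t, ht, hbt⟩ := hb
    exact ⟨a.1, mem_iUnion₂.mpr ⟨s, hs, has⟩, b.1, mem_iUnion₂.mpr ⟨t, ht, hbt⟩, hap, hpb⟩

lemma restrict_sup (U : Set P) (hU : DClosed U) (X Y : Co P) :
    coRestrict U (X ⊔ Y) = coRestrict U X ⊔ coRestrict U Y := by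
  rw [← sSup_pair, restrict_sSup U hU, Set.image_pair, sSup_pair]

lemma restrict_inf (U : Set P) (X Y : Co P) :
    coRestrict U (X ⊓ Y) = coRestrict U X ⊓ coRestrict U Y := by
  rw [← sInf_pair, restrict_sInf U, Set.image_pair, sInf_pair]

lemma restrict_surj (U : Set P) :
    Function.Surjective (coRestrict U : Co P → Co {p : P // p ∉ U}) := by
  intro V
  refine ⟨⟨hull (Subtype.val '' V.1), hull_ordConnected _⟩, ?_⟩
  apply Subtype.ext
  show Subtype.val ⁻¹' (hull (Subtype.val '' V.1)) = V.1
  ext ⟨p, hp⟩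
  simp only [mem_preimage]
  constructor
  · rintro ⟨x, ⟨a, ha, rfl⟩, y, ⟨b, hb, rfl⟩, hxp, hpy⟩
    exact V.2.out ha hb ⟨hxp, hpy⟩
  · intro hv
    exact subset_hull _ ⟨⟨p, hp⟩, hv, rfl⟩

end Stmt14Aux
namespace Stmt14Aux

variable {P : Type*} [PartialOrder P]

lemma sngl_coe (p : P) : (Co.sngl p).1 = {p} := rfl
lemma emp_coe : (Co.emp : Co P).1 = ∅ := rfl

lemma inf_sngl_of_mem {X : Co P} {p : P} (hp : p ∈ X.1) : X ⊓ Co.sngl p = Co.sngl p := by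
  apply Subtype.ext
  rw [inf_coe, sngl_coe]
  exact Set.inter_eq_self_of_subset_right (Set.singleton_subset_iff.mpr hp)

lemma inf_sngl_of_not_mem {X : Co P} {p : P} (hp : p ∉ X.1) : X ⊓ Co.sngl p = Co.emp := by
  apply Subtype.ext
  rw [inf_coe, sngl_coe, emp_coe]
  rw [Set.inter_comm]
  exact Set.singleton_inter_eq_empty.mpr hp

lemma emp_le (X : Co P) : (Co.emp : Co P) ≤ X := Co_le_iff.mpr (Set.empty_subset _)

lemma sup_emp (X : Co P) : X ⊔ Co.emp = X := sup_eq_left.mpr (emp_le X)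
lemma emp_sup (X : Co P) : Co.emp ⊔ X = X := sup_eq_right.mpr (emp_le X)

end Stmt14Aux
open Stmt14Aux in
theorem stmt14 (P : Type*) [PartialOrder P] (U : Set P) (hU : DClosed U) :
    IsCompleteCongr (fun X Y : Co P => X.1 ∪ U = Y.1 ∪ U) ∧
    (∀ X Y : Co P, coRestrict U (X ⊔ Y) = coRestrict U X ⊔ coRestrict U Y) ∧
    (∀ X Y : Co P, coRestrict U (X ⊓ Y) = coRestrict U X ⊓ coRestrict U Y) ∧
    Function.Surjective (coRestrict U : Co P → Co {p : P // p ∉ U}) ∧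
    (∀ X Y : Co P, X.1 ∪ U = Y.1 ∪ U ↔ coRestrict U X = coRestrict U Y) ∧
    (∀ θ : Co P → Co P → Prop, IsCompleteCongr θ →
      DClosed {p : P | θ (Co.sngl p) Co.emp} ∧
      ∀ X Y : Co P, θ X Y ↔
        X.1 ∪ {p : P | θ (Co.sngl p) Co.emp} = Y.1 ∪ {p : P | θ (Co.sngl p) Co.emp}) := by
  refine ⟨?_, restrict_sup U hU, restrict_inf U, restrict_surj U, key5 U, ?_⟩
  · constructor
    · intro x; rfl
    · intro x y h; exact h.symm
    · intro x y z h1 h2; exact h1.trans h2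
    · intro a b c d hab hcd
      rw [key5] at hab hcd ⊢
      rw [restrict_sup U hU, restrict_sup U hU, hab, hcd]
    · intro a b c d hab hcd
      rw [key5] at hab hcd ⊢
      rw [restrict_inf U, restrict_inf U, hab, hcd]
    · intro x Y hne h
      rw [key5, restrict_sSup U hU]
      obtain ⟨y0, hy0⟩ := hne
      refine le_antisymm ?_ ?_
      · rw [(key5 U x y0).mp (h y0 hy0)]
        exact le_sSup (Set.mem_image_of_mem _ hy0)
      · refine sSup_le ?_
        rintro v ⟨y, hy, rfl⟩
        exact le_of_eq ((key5 U x y).mp (h y hy)).symm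
    · intro x Y hne h
      rw [key5, restrict_sInf U]
      obtain ⟨y0, hy0⟩ := hne
      refine le_antisymm ?_ ?_
      · refine le_sInf ?_
        rintro v ⟨y, hy, rfl⟩
        exact le_of_eq ((key5 U x y).mp (h y hy))
      · rw [(key5 U x y0).mp (h y0 hy0)]
        exact sInf_le (Set.mem_image_of_mem _ hy0)
  · intro θ hθ
    set U' : Set P := {p : P | θ (Co.sngl p) Co.emp} with hU'
    have lemA : ∀ X Z : Co P, θ X Z → ∀ p, p ∈ X.1 → p ∉ Z.1 → θ (Co.sngl p) Co.emp := by
      intro X Z h p hpX hpZ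
      have h1 := hθ.inf h (hθ.refl (Co.sngl p))
      rwa [inf_sngl_of_mem hpX, inf_sngl_of_not_mem hpZ] at h1
    have lemB : ∀ X Z : Co P, Z ≤ X →
        (∀ p, p ∈ X.1 → p ∉ Z.1 → θ (Co.sngl p) Co.emp) → θ X Z := by
      intro X Z hZX hsub
      by_cases hd : ∃ p, p ∈ X.1 ∧ p ∉ Z.1
      · obtain ⟨p₀, hp₀⟩ := hd
        set S : Set (Co P) := (fun p : P => Z ⊔ Co.sngl p) '' {p | p ∈ X.1 ∧ p ∉ Z.1} with hS
        have hs : ∀ v ∈ S, θ Z v := by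
          rintro v ⟨p, hp, rfl⟩
          have h1 : θ (Z ⊔ Co.sngl p) (Z ⊔ Co.emp) :=
            hθ.sup (hθ.refl Z) (hsub p hp.1 hp.2)
          rw [sup_emp] at h1
          exact hθ.symm h1
        have h3 : θ Z (sSup S) := hθ.cSup Z S ⟨_, ⟨p₀, hp₀, rfl⟩⟩ hs
        have h4 : sSup S = X := by
          refine le_antisymm ?_ ?_
          · refine sSup_le ?_
            rintro v ⟨p, hp, rfl⟩
            exact sup_le hZX (Co_le_iff.mpr (Set.singleton_subset_iff.mpr hp.1))
          · refine Co_le_iff.mpr ?_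
            intro q hq
            by_cases hqZ : q ∈ Z.1
            · exact Co_le_iff.mp (le_sSup (Set.mem_image_of_mem (fun p => Z ⊔ Co.sngl p) hp₀))
                (Co_le_iff.mp (le_sup_left (a := Z) (b := Co.sngl p₀)) hqZ)
            · exact Co_le_iff.mp (le_sSup (Set.mem_image_of_mem (fun p => Z ⊔ Co.sngl p) (Set.mem_setOf_eq ▸ ⟨hq, hqZ⟩)))
                (Co_le_iff.mp (le_sup_right (a := Z) (b := Co.sngl q)) rfl)
        rw [h4] at h3
        exact hθ.symm h3
      · push_neg at hd
        have hXZ : X = Z := le_antisymm (Co_le_iff.mpr hd) hZX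
        rw [hXZ]
        exact hθ.refl Z
    constructor
    · intro x p y hxp hpy hxy
      have hpA : p ∈ (Co.sngl x ⊔ Co.sngl y).1 := by
        refine (Co.sngl x ⊔ Co.sngl y).2.out
          (Co_le_iff.mp (le_sup_left (a := Co.sngl x) (b := Co.sngl y)) rfl)
          (Co_le_iff.mp (le_sup_right (a := Co.sngl x) (b := Co.sngl y)) rfl)
          ⟨hxp.le, hpy.le⟩
      rcases hxy with hx | hy
      · have h1 : θ (Co.sngl x ⊔ Co.sngl y) (Co.emp ⊔ Co.sngl y) := hθ.sup hx (hθ.refl _)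
        rw [emp_sup] at h1
        have h2 := hθ.inf h1 (hθ.refl (Co.sngl p))
        rwa [inf_sngl_of_mem hpA,
          inf_sngl_of_not_mem (by simp [sngl_coe]; exact fun e => hpy.ne e)] at h2
      · have h1 : θ (Co.sngl x ⊔ Co.sngl y) (Co.sngl x ⊔ Co.emp) := hθ.sup (hθ.refl _) hy
        rw [sup_emp] at h1
        have h2 := hθ.inf h1 (hθ.refl (Co.sngl p))
        rwa [inf_sngl_of_mem hpA,
          inf_sngl_of_not_mem (by simp [sngl_coe]; exact fun e => hxp.ne e.symm)] at h2
    · intro X Y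
      constructor
      · intro h
        have hXm : θ (X ⊓ Y) X := by
          have h1 := hθ.inf (hθ.refl X) (hθ.symm h)
          rwa [inf_idem] at h1
        have hYm : θ (X ⊓ Y) Y := by
          have h1 := hθ.inf h (hθ.refl Y)
          rwa [inf_idem] at h1
        ext q
        simp only [Set.mem_union, Set.mem_setOf_eq]
        constructor
        · rintro (hq | hq)
          · by_cases hqm : q ∈ (X ⊓ Y).1
            · left
              rw [inf_coe] at hqm
              exact hqm.2
            · right
              exact lemA X (X ⊓ Y) (hθ.symm hXm) q hq hqm
          · right; exact hq
        · rintro (hq | hq)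
          · by_cases hqm : q ∈ (X ⊓ Y).1
            · left
              rw [inf_coe] at hqm
              exact hqm.1
            · right
              exact lemA Y (X ⊓ Y) (hθ.symm hYm) q hq hqm
          · right; exact hq
      · intro h
        have h1 : θ X (X ⊓ Y) := by
          refine lemB X (X ⊓ Y) inf_le_left ?_
          intro p hp hpn
          by_contra hpU
          apply hpn
          rw [inf_coe]
          have h2 : p ∈ Y.1 ∪ U' := h ▸ (Or.inl hp : p ∈ X.1 ∪ U')
          exact ⟨hp, h2.resolve_right hpU⟩
        have h2 : θ Y (X ⊓ Y) := by
          refine lemB Y (X ⊓ Y) inf_le_right ?_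
          intro p hp hpn
          by_contra hpU
          apply hpn
          rw [inf_coe]
          have h3 : p ∈ X.1 ∪ U' := h.symm ▸ (Or.inl hp : p ∈ Y.1 ∪ U')
          exact ⟨h3.resolve_right hpU, hp⟩
        exact hθ.trans h1 (hθ.symm h2)
end

section
/- For a poset P, the lattice Co(P) is completely subdirectly irreducible (i.e., it has a least nonzero complete congruence) if and only if there exists a least, under inclusion, nonempty D-closed subset of P. -/
/-! Common definitions: lattices of order-convex subsets of a poset,
length of a poset, the identities (S), (U), (B), (L2), (H_n), (H_{m,n}),
join-irreducibility, the join-dependency relation, join-seeds,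
the posets P_{I,J}, tree-like posets, D-closed sets,
and complete lattice congruences. -/

open Set

namespace Stmt16Aux

variable {P : Type*} [PartialOrder P]

/-- The order-convex hull of a set. -/
def hull (S : Set P) : Set P := {p | ∃ a ∈ S, ∃ b ∈ S, a ≤ p ∧ p ≤ b}

lemma hull_ordConnected (S : Set P) : (hull S).OrdConnected := by
  constructor
  rintro x ⟨a, ha, b, hb, hax, hxb⟩ y ⟨c, hc, d, hd, hcy, hyd⟩ z hz
  exact ⟨a, ha, d, hd, hax.trans hz.1, hz.2.trans hyd⟩

lemma subset_hull (S : Set P) : S ⊆ hull S :=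
  fun p hp => ⟨p, hp, p, hp, le_rfl, le_rfl⟩

lemma hull_mono {S T : Set P} (h : S ⊆ T) : hull S ⊆ hull T := by
  rintro p ⟨a, ha, b, hb, hap, hpb⟩
  exact ⟨a, h ha, b, h hb, hap, hpb⟩

lemma hull_subset {S T : Set P} (hT : T.OrdConnected) (h : S ⊆ T) : hull S ⊆ T := by
  rintro p ⟨a, ha, b, hb, hap, hpb⟩
  exact hT.out (h ha) (h hb) ⟨hap, hpb⟩

lemma le_def {X Y : Co P} : X ≤ Y ↔ X.1 ⊆ Y.1 := Iff.rfl

lemma sSup_coe (𝒮 : Set (Co P)) : (sSup 𝒮).1 = hull (⋃ X ∈ 𝒮, X.1) := by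
  have h : IsLUB 𝒮 (⟨hull (⋃ X ∈ 𝒮, X.1), hull_ordConnected _⟩ : Co P) := by
    constructor
    · intro X hX
      exact le_def.mpr ((Set.subset_biUnion_of_mem hX).trans (subset_hull _))
    · intro Z hZ
      exact le_def.mpr (hull_subset Z.2 (Set.iUnion₂_subset fun X hX => le_def.mp (hZ hX)))
  rw [(isLUB_sSup 𝒮).unique h]

lemma sup_coe (X Y : Co P) : (X ⊔ Y).1 = hull (X.1 ∪ Y.1) := by
  have h : IsLUB {X, Y} (⟨hull (X.1 ∪ Y.1), hull_ordConnected _⟩ : Co P) := by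
    constructor
    · rintro Z (rfl | rfl)
      · exact le_def.mpr (Set.subset_union_left.trans (subset_hull _))
      · exact le_def.mpr (Set.subset_union_right.trans (subset_hull _))
    · intro Z hZ
      exact le_def.mpr (hull_subset Z.2 (Set.union_subset
        (le_def.mp (hZ (by left; rfl))) (le_def.mp (hZ (by right; rfl)))))
  rw [isLUB_pair.unique h]

lemma inf_coe (X Y : Co P) : (X ⊓ Y).1 = X.1 ∩ Y.1 := by
  have h : IsGLB {X, Y} (⟨X.1 ∩ Y.1, X.2.inter Y.2⟩ : Co P) := by
    constructor
    · rintro Z (rfl | rfl)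
      · exact le_def.mpr Set.inter_subset_left
      · exact le_def.mpr Set.inter_subset_right
    · intro Z hZ
      exact le_def.mpr (Set.subset_inter
        (le_def.mp (hZ (by left; rfl))) (le_def.mp (hZ (by right; rfl))))
  rw [isGLB_pair.unique h]

lemma sInf_coe (𝒮 : Set (Co P)) : (sInf 𝒮).1 = ⋂ X ∈ 𝒮, X.1 := rfl

lemma emp_le (X : Co P) : Co.emp ≤ X := le_def.mpr (Set.empty_subset _)

omit [PartialOrder P] in
lemma mem_of_diff_eq {A B U : Set P} {p : P} (h : A \ U = B \ U)
    (hp : p ∈ A) (hpU : p ∉ U) : p ∈ B := by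
  have hm : p ∈ A \ U := ⟨hp, hpU⟩
  rw [h] at hm
  exact hm.1

lemma hull_diff {U S : Set P} (hU : DClosed U) : hull S \ U ⊆ hull (S \ U) := by
  rintro p ⟨⟨a, ha, b, hb, hap, hpb⟩, hpU⟩
  by_cases haU : a ∈ U
  · have hlt : a < p := hap.lt_of_ne fun h => hpU (h ▸ haU)
    have hpb' : p = b := by
      by_contra hne
      exact hpU (hU a p b hlt (hpb.lt_of_ne hne) (Or.inl haU))
    have hpS : p ∈ S := by rw [hpb']; exact hb
    exact ⟨p, ⟨hpS, hpU⟩, p, ⟨hpS, hpU⟩, le_rfl, le_rfl⟩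
  · by_cases hbU : b ∈ U
    · have hlt : p < b := hpb.lt_of_ne fun h => hpU (h.symm ▸ hbU)
      have hap' : a = p := by
        by_contra hne
        exact hpU (hU a p b (hap.lt_of_ne hne) hlt (Or.inr hbU))
      have hpS : p ∈ S := hap' ▸ ha
      exact ⟨p, ⟨hpS, hpU⟩, p, ⟨hpS, hpU⟩, le_rfl, le_rfl⟩
    · exact ⟨a, ⟨ha, haU⟩, b, ⟨hb, hbU⟩, hap, hpb⟩

lemma hull_diff_eq {U S : Set P} (hU : DClosed U) : hull S \ U = hull (S \ U) \ U :=
  Set.Subset.antisymm (fun p hp => ⟨hull_diff hU hp, hp.2⟩)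
    (fun p hp => ⟨hull_mono Set.diff_subset hp.1, hp.2⟩)

/-- The relation `X \ U = Y \ U` is a complete congruence of `Co P`. -/
lemma congrU {U : Set P} (hU : DClosed U) :
    IsCompleteCongr (fun X Y : Co P => X.1 \ U = Y.1 \ U) where
  refl _ := rfl
  symm h := h.symm
  trans h1 h2 := h1.trans h2
  sup {a b c d} h1 h2 := by
    show (a ⊔ c).1 \ U = (b ⊔ d).1 \ U
    rw [sup_coe, sup_coe]
    have e : (a.1 ∪ c.1) \ U = (b.1 ∪ d.1) \ U := by
      rw [Set.union_diff_distrib, h1, h2, Set.union_diff_distrib]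
    calc hull (a.1 ∪ c.1) \ U = hull ((a.1 ∪ c.1) \ U) \ U := hull_diff_eq hU
      _ = hull ((b.1 ∪ d.1) \ U) \ U := by rw [e]
      _ = hull (b.1 ∪ d.1) \ U := (hull_diff_eq hU).symm
  inf {a b c d} h1 h2 := by
    show (a ⊓ c).1 \ U = (b ⊓ d).1 \ U
    rw [inf_coe, inf_coe]
    ext p
    constructor
    · rintro ⟨⟨h3, h4⟩, h5⟩
      exact ⟨⟨mem_of_diff_eq h1 h3 h5, mem_of_diff_eq h2 h4 h5⟩, h5⟩
    · rintro ⟨⟨h3, h4⟩, h5⟩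
      exact ⟨⟨mem_of_diff_eq h1.symm h3 h5, mem_of_diff_eq h2.symm h4 h5⟩, h5⟩
  cSup x Y hYne hall := by
    show x.1 \ U = (sSup Y).1 \ U
    rw [sSup_coe, hull_diff_eq hU]
    have h1 : (⋃ y ∈ Y, y.1) \ U = x.1 \ U := by
      ext p
      simp only [Set.mem_diff, Set.mem_iUnion, exists_prop]
      constructor
      · rintro ⟨⟨y, hy, hp⟩, hpU⟩
        exact ⟨mem_of_diff_eq (hall y hy).symm hp hpU, hpU⟩
      · rintro ⟨hp, hpU⟩
        obtain ⟨y, hy⟩ := hYne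
        exact ⟨⟨y, hy, mem_of_diff_eq (hall y hy) hp hpU⟩, hpU⟩
    rw [h1]
    exact Set.Subset.antisymm (fun p hp => ⟨subset_hull _ hp, hp.2⟩)
      (fun p hp => ⟨hull_subset x.2 Set.diff_subset hp.1, hp.2⟩)
  cInf x Y hYne hall := by
    show x.1 \ U = (sInf Y).1 \ U
    rw [sInf_coe]
    ext p
    simp only [Set.mem_diff, Set.mem_iInter]
    constructor
    · rintro ⟨hp, hpU⟩
      exact ⟨fun y hy => mem_of_diff_eq (hall y hy) hp hpU, hpU⟩
    · rintro ⟨hp, hpU⟩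
      obtain ⟨y, hy⟩ := hYne
      exact ⟨mem_of_diff_eq (hall y hy).symm (hp y hy) hpU, hpU⟩

/-- Every nontrivial complete congruence collapses some singleton with the empty set. -/
lemma collapse_singleton {θ : Co P → Co P → Prop} (h : IsCompleteCongr θ)
    {X Y : Co P} (hXY : θ X Y) (hne : X ≠ Y) : ∃ p : P, θ (Co.sngl p) Co.emp := by
  have hinfsup : θ (X ⊓ Y) (X ⊔ Y) := by
    have h1 : θ (X ⊓ Y) (Y ⊓ Y) := h.inf hXY (h.refl Y)
    have h2 : θ (X ⊔ Y) (Y ⊔ Y) := h.sup hXY (h.refl Y)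
    rw [inf_idem] at h1; rw [sup_idem] at h2
    exact h.trans h1 (h.symm h2)
  obtain ⟨p, hp1, hp2⟩ : ∃ p, p ∈ (X ⊔ Y).1 ∧ p ∉ (X ⊓ Y).1 := by
    by_contra hc
    push_neg at hc
    have hsub : (X ⊔ Y).1 ⊆ (X ⊓ Y).1 := hc
    apply hne
    apply Subtype.ext
    apply Set.Subset.antisymm
    · exact (le_def.mp le_sup_left).trans (hsub.trans (le_def.mp inf_le_right))
    · exact (le_def.mp le_sup_right).trans (hsub.trans (le_def.mp inf_le_left))
  have key := h.inf hinfsup (h.refl (Co.sngl p))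
  have e1 : (X ⊓ Y) ⊓ Co.sngl p = Co.emp := by
    apply Subtype.ext
    rw [inf_coe]
    exact Set.eq_empty_of_forall_notMem fun q ⟨hq1, hq2⟩ => hp2 (hq2 ▸ hq1)
  have e2 : (X ⊔ Y) ⊓ Co.sngl p = Co.sngl p := by
    apply Subtype.ext
    rw [inf_coe]
    exact Set.Subset.antisymm Set.inter_subset_right
      (fun q (hq : q = p) => ⟨hq ▸ hp1, hq⟩)
  rw [e1, e2] at key
  exact ⟨p, h.symm key⟩

lemma mem_hull_pair {x y p : P} (hxp : x ≤ p) (hpy : p ≤ y) :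
    p ∈ hull ({x} ∪ {y} : Set P) :=
  ⟨x, Or.inl rfl, y, Or.inr rfl, hxp, hpy⟩

/-- The set of points whose singleton is collapsed with ∅ is D-closed. -/
lemma dclosed_V {θ : Co P → Co P → Prop} (h : IsCompleteCongr θ) :
    DClosed {p : P | θ (Co.sngl p) Co.emp} := by
  intro x p y hxp hpy hmem
  have hsupmem : p ∈ (Co.sngl x ⊔ Co.sngl y).1 := by
    rw [sup_coe]; exact mem_hull_pair hxp.le hpy.le
  rcases hmem with hx | hy
  · have h1 : θ (Co.sngl x ⊔ Co.sngl y) (Co.emp ⊔ Co.sngl y) := h.sup hx (h.refl _)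
    rw [sup_eq_right.mpr (emp_le _)] at h1
    have h2 := h.inf h1 (h.refl (Co.sngl p))
    have e1 : (Co.sngl x ⊔ Co.sngl y) ⊓ Co.sngl p = Co.sngl p := by
      apply Subtype.ext
      rw [inf_coe]
      exact Set.Subset.antisymm Set.inter_subset_right
        (fun q (hq : q = p) => ⟨hq ▸ hsupmem, hq⟩)
    have e2 : Co.sngl y ⊓ Co.sngl p = Co.emp := by
      apply Subtype.ext
      rw [inf_coe]
      exact Set.eq_empty_of_forall_notMem fun q ⟨hq1, hq2⟩ =>
        hpy.ne' ((hq2 : q = p) ▸ (hq1 : q = y)).symm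
    rw [e1, e2] at h2
    exact h2
  · have h1 : θ (Co.sngl x ⊔ Co.sngl y) (Co.sngl x ⊔ Co.emp) := h.sup (h.refl _) hy
    rw [sup_eq_left.mpr (emp_le _)] at h1
    have h2 := h.inf h1 (h.refl (Co.sngl p))
    have e1 : (Co.sngl x ⊔ Co.sngl y) ⊓ Co.sngl p = Co.sngl p := by
      apply Subtype.ext
      rw [inf_coe]
      exact Set.Subset.antisymm Set.inter_subset_right
        (fun q (hq : q = p) => ⟨hq ▸ hsupmem, hq⟩)
    have e2 : Co.sngl x ⊓ Co.sngl p = Co.emp := by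
      apply Subtype.ext
      rw [inf_coe]
      exact Set.eq_empty_of_forall_notMem fun q ⟨hq1, hq2⟩ =>
        hxp.ne (((hq2 : q = p) ▸ (hq1 : q = x)).symm)
    rw [e1, e2] at h2
    exact h2

/-- Joining a nonempty set of collapsed singletons onto `Z` stays in the same class. -/
lemma join_singles {θ : Co P → Co P → Prop} (h : IsCompleteCongr θ) {S : Set P}
    (hS : ∀ p ∈ S, θ (Co.sngl p) Co.emp) (hSne : S.Nonempty) (Z : Co P) :
    θ Z ⟨hull (Z.1 ∪ S), hull_ordConnected _⟩ := by
  set T : Set (Co P) := (fun p => Z ⊔ Co.sngl p) '' S with hT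
  have h1 : ∀ t ∈ T, θ Z t := by
    rintro t ⟨p, hp, rfl⟩
    have := h.sup (h.refl Z) (h.symm (hS p hp))
    rwa [sup_eq_left.mpr (emp_le _)] at this
  have h2 := h.cSup Z T (hSne.image _) h1
  have h3 : sSup T = ⟨hull (Z.1 ∪ S), hull_ordConnected _⟩ := by
    apply Subtype.ext
    rw [sSup_coe]
    have hUnion : (⋃ t ∈ T, t.1) = ⋃ p ∈ S, hull (Z.1 ∪ {p}) := by
      rw [hT, Set.biUnion_image]
      refine Set.iUnion₂_congr fun p hp => ?_
      refine (sup_coe _ _).trans ?_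
      rfl
    rw [hUnion]
    apply Set.Subset.antisymm
    · apply hull_subset (hull_ordConnected _)
      refine Set.iUnion₂_subset fun p hp => hull_mono ?_
      exact Set.union_subset_union_right _ (Set.singleton_subset_iff.mpr hp)
    · apply hull_mono
      rintro q (hq | hq)
      · obtain ⟨p₀, hp₀⟩ := hSne
        exact Set.mem_biUnion hp₀ (subset_hull _ (Or.inl hq))
      · exact Set.mem_biUnion hq (subset_hull _ (Or.inr rfl))
  rwa [h3] at h2

/-- If `X` and `Y` agree off `V` and all singletons of `V` are collapsed with ∅,
then `X` and `Y` are congruent. -/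
lemma theta_of_diff {θ : Co P → Co P → Prop} (h : IsCompleteCongr θ) {V : Set P}
    (hV : ∀ p ∈ V, θ (Co.sngl p) Co.emp) {X Y : Co P}
    (hXY : X.1 \ V = Y.1 \ V) : θ X Y := by
  set S : Set P := (X.1 ∪ Y.1) ∩ V with hSdef
  rcases S.eq_empty_or_nonempty with hSe | hSne
  · have : X = Y := by
      apply Subtype.ext
      ext u
      constructor
      · intro hu
        by_cases huV : u ∈ V
        · exact absurd (show u ∈ (∅ : Set P) by rw [← hSe]; exact ⟨Or.inl hu, huV⟩) (Set.notMem_empty u)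
        · exact mem_of_diff_eq hXY hu huV
      · intro hu
        by_cases huV : u ∈ V
        · exact absurd (show u ∈ (∅ : Set P) by rw [← hSe]; exact ⟨Or.inr hu, huV⟩) (Set.notMem_empty u)
        · exact mem_of_diff_eq hXY.symm hu huV
    rw [this]; exact h.refl Y
  · have hset : X.1 ∪ S = Y.1 ∪ S := by
      ext u
      constructor
      · rintro (hu | hu)
        · by_cases huV : u ∈ V
          · exact Or.inr ⟨Or.inl hu, huV⟩
          · exact Or.inl (mem_of_diff_eq hXY hu huV)
        · exact Or.inr hu
      · rintro (hu | hu)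
        · by_cases huV : u ∈ V
          · exact Or.inr ⟨Or.inr hu, huV⟩
          · exact Or.inl (mem_of_diff_eq hXY.symm hu huV)
        · exact Or.inr hu
    have hSV : ∀ p ∈ S, θ (Co.sngl p) Co.emp := fun p hp => hV p hp.2
    have hx := join_singles h hSV hSne X
    have hy := join_singles h hSV hSne Y
    have : (⟨hull (X.1 ∪ S), hull_ordConnected _⟩ : Co P)
        = ⟨hull (Y.1 ∪ S), hull_ordConnected _⟩ := Subtype.ext (by rw [hset])
    rw [this] at hx
    exact h.trans hx (h.symm hy)

end Stmt16Aux

theorem stmt16 (P : Type*) [PartialOrder P] :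
    (∃ θ : Co P → Co P → Prop, IsCompleteCongr θ ∧ (∃ X Y : Co P, θ X Y ∧ X ≠ Y) ∧
      ∀ θ' : Co P → Co P → Prop, IsCompleteCongr θ' → (∃ X Y : Co P, θ' X Y ∧ X ≠ Y) →
        ∀ X Y : Co P, θ X Y → θ' X Y) ↔
    (∃ U : Set P, DClosed U ∧ U.Nonempty ∧
      ∀ V : Set P, DClosed V → V.Nonempty → U ⊆ V) := by
  constructor
  · rintro ⟨θ, hθ, ⟨X₀, Y₀, hθ0, hne0⟩, hmin⟩
    obtain ⟨p₀, hp₀⟩ := Stmt16Aux.collapse_singleton hθ hθ0 hne0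
    refine ⟨{p : P | θ (Co.sngl p) Co.emp}, Stmt16Aux.dclosed_V hθ, ⟨p₀, hp₀⟩, ?_⟩
    intro W hW hWne p hp
    obtain ⟨q, hq⟩ := hWne
    have htriv : ∃ X Y : Co P, (X.1 \ W = Y.1 \ W) ∧ X ≠ Y := by
      refine ⟨Co.sngl q, Co.emp, ?_, ?_⟩
      · show ({q} : Set P) \ W = (∅ : Set P) \ W
        rw [Set.empty_diff, Set.diff_eq_empty.mpr (Set.singleton_subset_iff.mpr hq)]
      · intro h
        exact (Set.singleton_ne_empty q) (congrArg Subtype.val h)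
    have hres := hmin (fun A B : Co P => A.1 \ W = B.1 \ W) (Stmt16Aux.congrU hW) htriv
      (Co.sngl p) Co.emp hp
    by_contra hpW
    exact Set.notMem_empty p (Stmt16Aux.mem_of_diff_eq hres rfl hpW)
  · rintro ⟨U, hU, ⟨p₀, hp₀⟩, hUleast⟩
    refine ⟨fun A B : Co P => A.1 \ U = B.1 \ U, Stmt16Aux.congrU hU, ?_, ?_⟩
    · refine ⟨Co.sngl p₀, Co.emp, ?_, ?_⟩
      · show ({p₀} : Set P) \ U = (∅ : Set P) \ U
        rw [Set.empty_diff, Set.diff_eq_empty.mpr (Set.singleton_subset_iff.mpr hp₀)]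
      · intro h
        exact (Set.singleton_ne_empty p₀) (congrArg Subtype.val h)
    · intro θ' hθ' h0ex X Y hXY
      obtain ⟨X₀, Y₀, h0, hne0⟩ := h0ex
      obtain ⟨q, hq⟩ := Stmt16Aux.collapse_singleton hθ' h0 hne0
      have hUV : U ⊆ {p : P | θ' (Co.sngl p) Co.emp} :=
        hUleast _ (Stmt16Aux.dclosed_V hθ') ⟨q, hq⟩
      have hXYV : X.1 \ {p : P | θ' (Co.sngl p) Co.emp}
          = Y.1 \ {p : P | θ' (Co.sngl p) Co.emp} := by
        ext u
        constructor
        · rintro ⟨hu, huV⟩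
          exact ⟨Stmt16Aux.mem_of_diff_eq hXY hu (fun h => huV (hUV h)), huV⟩
        · rintro ⟨hu, huV⟩
          exact ⟨Stmt16Aux.mem_of_diff_eq hXY.symm hu (fun h => huV (hUV h)), huV⟩
      exact Stmt16Aux.theta_of_diff hθ' (fun p hp => hp) hXYV
end

section
/- For every poset P and every positive integer n, the lattice Co(P) satisfies the identity (H_n) if and only if lh(P) ≤ n. -/
/-! Common definitions: lattices of order-convex subsets of a poset,
length of a poset, the identities (S), (U), (B), (L2), (H_n), (H_{m,n}),
join-irreducibility, the join-dependency relation, join-seeds,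
the posets P_{I,J}, tree-like posets, D-closed sets,
and complete lattice congruences. -/

open Set

section CoLemmas

variable {P : Type*} [PartialOrder P]

namespace Co

lemma le_iff {X Y : Co P} : X ≤ Y ↔ X.1 ⊆ Y.1 := Iff.rfl

lemma coe_inf_s18 (X Y : Co P) : (X ⊓ Y).1 = X.1 ∩ Y.1 := by
  apply subset_antisymm
  · exact Set.subset_inter (le_iff.1 inf_le_left) (le_iff.1 inf_le_right)
  · exact le_iff.1 (le_inf (le_iff.2 Set.inter_subset_left)
      (le_iff.2 Set.inter_subset_right) :
      (mk' (X.1 ∩ Y.1) (X.2.inter Y.2)) ≤ X ⊓ Y)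

/-- The convex hull of the union of two convex sets. -/
def hullSet_s18 (X Y : Set P) : Set P :=
  {z | z ∈ X ∨ z ∈ Y ∨ ∃ x ∈ X, ∃ y ∈ Y, (x ≤ z ∧ z ≤ y) ∨ (y ≤ z ∧ z ≤ x)}

lemma hullSet_ordConnected_s18 {X Y : Set P} (hX : X.OrdConnected) (hY : Y.OrdConnected) :
    (hullSet_s18 X Y).OrdConnected := by
  constructor
  rintro a ha b hb z ⟨hz1, hz2⟩
  rcases ha with ha | ha | ⟨x, hx, y, hy, ⟨h1, h2⟩ | ⟨h1, h2⟩⟩ <;>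
    rcases hb with hb | hb | ⟨x', hx', y', hy', ⟨h1', h2'⟩ | ⟨h1', h2'⟩⟩
  · exact Or.inl (hX.out ha hb ⟨hz1, hz2⟩)
  · exact Or.inr (Or.inr ⟨a, ha, b, hb, Or.inl ⟨hz1, hz2⟩⟩)
  · exact Or.inr (Or.inr ⟨a, ha, y', hy', Or.inl ⟨hz1, hz2.trans h2'⟩⟩)
  · exact Or.inl (hX.out ha hx' ⟨hz1, hz2.trans h2'⟩)
  · exact Or.inr (Or.inr ⟨b, hb, a, ha, Or.inr ⟨hz1, hz2⟩⟩)
  · exact Or.inr (Or.inl (hY.out ha hb ⟨hz1, hz2⟩))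
  · exact Or.inr (Or.inl (hY.out ha hy' ⟨hz1, hz2.trans h2'⟩))
  · exact Or.inr (Or.inr ⟨x', hx', a, ha, Or.inr ⟨hz1, hz2.trans h2'⟩⟩)
  · exact Or.inl (hX.out hx hb ⟨h1.trans hz1, hz2⟩)
  · exact Or.inr (Or.inr ⟨x, hx, b, hb, Or.inl ⟨h1.trans hz1, hz2⟩⟩)
  · exact Or.inr (Or.inr ⟨x, hx, y', hy', Or.inl ⟨h1.trans hz1, hz2.trans h2'⟩⟩)
  · exact Or.inl (hX.out hx hx' ⟨h1.trans hz1, hz2.trans h2'⟩)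
  · exact Or.inr (Or.inr ⟨b, hb, y, hy, Or.inr ⟨h1.trans hz1, hz2⟩⟩)
  · exact Or.inr (Or.inl (hY.out hy hb ⟨h1.trans hz1, hz2⟩))
  · exact Or.inr (Or.inl (hY.out hy hy' ⟨h1.trans hz1, hz2.trans h2'⟩))
  · exact Or.inr (Or.inr ⟨x', hx', y, hy, Or.inr ⟨h1.trans hz1, hz2.trans h2'⟩⟩)

lemma coe_sup_s18 (X Y : Co P) : (X ⊔ Y).1 = hullSet_s18 X.1 Y.1 := by
  apply subset_antisymm
  · exact le_iff.1 (sup_le (le_iff.2 fun z hz => Or.inl hz)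
      (le_iff.2 fun z hz => Or.inr (Or.inl hz)) :
      X ⊔ Y ≤ mk' (hullSet_s18 X.1 Y.1) (hullSet_ordConnected_s18 X.2 Y.2))
  · rintro z (hz | hz | ⟨x, hx, y, hy, ⟨h1, h2⟩ | ⟨h1, h2⟩⟩)
    · exact le_iff.1 le_sup_left hz
    · exact le_iff.1 le_sup_right hz
    · exact (X ⊔ Y).2.out (le_iff.1 le_sup_left hx) (le_iff.1 le_sup_right hy) ⟨h1, h2⟩
    · exact (X ⊔ Y).2.out (le_iff.1 le_sup_right hy) (le_iff.1 le_sup_left hx) ⟨h1, h2⟩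

lemma mem_sup {X Y : Co P} {z : P} :
    z ∈ (X ⊔ Y).1 ↔ z ∈ X.1 ∨ z ∈ Y.1 ∨
      ∃ x ∈ X.1, ∃ y ∈ Y.1, (x ≤ z ∧ z ≤ y) ∨ (y ≤ z ∧ z ≤ x) := by
  rw [coe_sup_s18]; rfl

lemma mem_inf {X Y : Co P} {z : P} : z ∈ (X ⊓ Y).1 ↔ z ∈ X.1 ∧ z ∈ Y.1 := by
  rw [coe_inf_s18]; rfl

lemma emp_le (X : Co P) : (emp : Co P) ≤ X := le_iff.2 fun z hz => hz.elim

lemma emp_sup (X : Co P) : (emp : Co P) ⊔ X = X := sup_eq_right.2 (emp_le X)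

lemma sup_emp (X : Co P) : X ⊔ (emp : Co P) = X := sup_eq_left.2 (emp_le X)

end Co

end CoLemmas
section Unfold

variable {L : Type*} [Lattice L] (x x' : ℕ → L) (n : ℕ)

lemma Upoly_ge {i : ℕ} (h : n ≤ i) : Upoly x x' n i = x n := by
  rw [Upoly, dif_pos h]

lemma Upoly_lt {i : ℕ} (h : i < n) :
    Upoly x x' n i = x i ⊓ (Upoly x x' n (i + 1) ⊔ x' (i + 1)) := by
  rw [Upoly, dif_neg (by omega)]

lemma Vpoly_eq {i : ℕ} :
    Vpoly x x' n i i = (x i ⊓ Upoly x x' n (i + 1)) ⊔ (x i ⊓ x' (i + 1)) := by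
  rw [Vpoly, dif_pos le_rfl]

lemma Vpoly_lt {i j : ℕ} (h : j < i) :
    Vpoly x x' n i j = x j ⊓ (Vpoly x x' n i (j + 1) ⊔ x' (j + 1)) := by
  rw [Vpoly, dif_neg (by omega)]

lemma Wpoly_eq {i : ℕ} :
    Wpoly x x' n i i = x i ⊓ (x' (i + 1) ⊔ x' (i + 2)) ⊓
      ((Upoly x x' n (i + 1) ⊓ (x i ⊔ x' (i + 2))) ⊔ x' (i + 1)) := by
  rw [Wpoly, dif_pos le_rfl]

lemma Wpoly_lt {i j : ℕ} (h : j < i) :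
    Wpoly x x' n i j = x j ⊓ (Wpoly x x' n i (j + 1) ⊔ x' (j + 1)) := by
  rw [Wpoly, dif_neg (by omega)]

lemma Vpoly_le_Upoly {i j : ℕ} (hj : j ≤ i) (hi : i < n) :
    Vpoly x x' n i j ≤ Upoly x x' n j := by
  induction' hk : i - j with k ih generalizing j
  · have hij : i = j := by omega
    subst hij
    rw [Vpoly_eq, Upoly_lt x x' n hi]
    exact sup_le (le_inf inf_le_left (inf_le_right.trans le_sup_left))
      (le_inf inf_le_left (inf_le_right.trans le_sup_right))
  · have hji : j < i := by omega
    rw [Vpoly_lt x x' n hji, Upoly_lt x x' n (show j < n by omega)]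
    exact inf_le_inf_left _ (sup_le_sup_right (ih (by omega) (by omega)) _)

lemma Wpoly_le_Upoly {i j : ℕ} (hj : j ≤ i) (hi : i + 2 ≤ n) :
    Wpoly x x' n i j ≤ Upoly x x' n j := by
  induction' hk : i - j with k ih generalizing j
  · have hij : i = j := by omega
    subst hij
    rw [Wpoly_eq, Upoly_lt x x' n (show i < n by omega)]
    apply le_inf
    · exact le_trans inf_le_left inf_le_left
    · exact inf_le_right.trans (sup_le_sup_right inf_le_left _)
  · have hji : j < i := by omega
    rw [Wpoly_lt x x' n hji, Upoly_lt x x' n (show j < n by omega)]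
    exact inf_le_inf_left _ (sup_le_sup_right (ih (by omega) (by omega)) _)

lemma le_bigJoin (f : ℕ → L) {k m : ℕ} (h : k ≤ m) : f k ≤ bigJoin f m := by
  induction' m with m ih
  · obtain rfl : k = 0 := by omega
    exact le_rfl
  · rcases Nat.lt_or_ge k (m + 1) with h' | h'
    · exact le_trans (ih (by omega)) le_sup_left
    · obtain rfl : k = m + 1 := by omega
      exact le_sup_right

lemma bigJoin_le (f : ℕ → L) {m : ℕ} {a : L} (h : ∀ k ≤ m, f k ≤ a) :
    bigJoin f m ≤ a := by
  induction' m with m ih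
  · exact h 0 le_rfl
  · exact sup_le (ih fun k hk => h k (by omega)) (h (m + 1) le_rfl)

end Unfold
section Converse

variable {P : Type*} [PartialOrder P]

lemma Co.ext' {X Y : Co P} (h : X.1 = Y.1) : X = Y := Subtype.ext h

lemma Co.sngl_inf_sngl {a b : P} (h : a ≠ b) :
    (Co.sngl a : Co P) ⊓ Co.sngl b = Co.emp := by
  apply Co.ext'
  rw [Co.coe_inf_s18]
  ext z
  simp only [Co.sngl, Co.emp, Set.mem_inter_iff, Set.mem_singleton_iff, Set.mem_empty_iff_false,
    iff_false, not_and]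
  rintro rfl
  exact h

lemma Co.mem_sngl {a z : P} : z ∈ (Co.sngl a : Co P).1 ↔ z = a := Iff.rfl

lemma Co.emp_inf (X : Co P) : (Co.emp : Co P) ⊓ X = Co.emp :=
  le_antisymm inf_le_left (Co.emp_le _)

lemma Co.inf_emp (X : Co P) : X ⊓ (Co.emp : Co P) = Co.emp :=
  le_antisymm inf_le_right (Co.emp_le _)

/-- Every finite chain of a partial order can be listed in strictly increasing order. -/
lemma exists_sorted_list [DecidableEq P] (C : Finset P)
    (hC : IsChain (· ≤ ·) (C : Set P)) :
    ∃ l : List P, l.toFinset = C ∧ l.Pairwise (· < ·) := by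
  induction' hcard : C.card with m ih generalizing C
  · exact ⟨[], by simpa [Finset.card_eq_zero.1 hcard], List.Pairwise.nil⟩
  · have hne : C.Nonempty := Finset.card_pos.1 (by omega)
    obtain ⟨m₀, hm₀, hmin⟩ := C.exists_minimal hne
    have hleast : ∀ a ∈ C, a ≠ m₀ → m₀ < a := by
      intro a ha hne'
      rcases hC ha hm₀ hne' with h | h
      · exact absurd (le_antisymm h (hmin ha h)) hne'
      · exact lt_of_le_of_ne h (Ne.symm hne')
    obtain ⟨l', hl'1, hl'2⟩ := ih (C.erase m₀)
      (hC.mono (by exact_mod_cast Finset.erase_subset _ _)) (by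
        simp [Finset.card_erase_of_mem hm₀, hcard])
    refine ⟨m₀ :: l', ?_, ?_⟩
    · rw [List.toFinset_cons, hl'1, Finset.insert_erase hm₀]
    · rw [List.pairwise_cons]
      refine ⟨fun b hb => ?_, hl'2⟩
      have hb' : b ∈ C.erase m₀ := by rw [← hl'1]; exact List.mem_toFinset.2 hb
      exact hleast b (Finset.mem_of_mem_erase hb') (Finset.ne_of_mem_erase hb')

/-- From the failure of `lengthLE P n`, extract a strictly increasing `(n+2)`-chain. -/
lemma exists_long_chain {n : ℕ} (h : ¬ lengthLE P n) :
    ∃ p : ℕ → P, ∀ i j : ℕ, i < j → j ≤ n + 1 → p i < p j := by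
  haveI := Classical.decEq P
  simp only [lengthLE, not_forall] at h
  obtain ⟨C, hC, hcard⟩ := h
  obtain ⟨l, hl1, hl2⟩ := exists_sorted_list C hC
  have hnd : l.Nodup := hl2.imp (fun h => ne_of_lt h)
  have hlen : n + 2 ≤ l.length := by
    rw [← List.toFinset_card_of_nodup hnd, hl1]; omega
  refine ⟨fun k => l.get ⟨min k (n + 1), by omega⟩, fun i j hij hj => ?_⟩
  apply hl2.rel_get_of_lt
  simp only [Fin.mk_lt_mk]
  omega

lemma not_IdH_of_long_chain {n : ℕ} (hn : 0 < n) (h : ¬ lengthLE P n) :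
    ¬ IdH n (Co P) := by
  obtain ⟨p, hp⟩ := exists_long_chain h
  have hple : ∀ i j : ℕ, i ≤ j → j ≤ n + 1 → p i ≤ p j := by
    intro i j hij hj
    rcases eq_or_lt_of_le hij with rfl | h'
    · exact le_rfl
    · exact (hp i j h' hj).le
  have hpne : ∀ i j : ℕ, i < j → j ≤ n + 1 → p i ≠ p j := fun i j h1 h2 => ne_of_lt (hp i j h1 h2)
  intro hid
  set X : ℕ → Co P := fun i => Co.sngl (p (n - i)) with hX
  set X' : ℕ → Co P := fun _ => Co.sngl (p (n + 1)) with hX'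
  -- U computation
  have hU : ∀ k, ∀ i, i ≤ n → n - i ≤ k → Upoly X X' n i = Co.sngl (p (n - i)) := by
    intro k
    induction' k with k ihk <;> intro i hi hk
    · have h0 : i = n := by omega
      rw [h0, Upoly_ge X X' n le_rfl]
    · rcases eq_or_ne i n with h0 | h0
      · rw [h0, Upoly_ge X X' n le_rfl]
      have hi' : i < n := by omega
      rw [Upoly_lt X X' n hi', ihk (i + 1) (by omega) (by omega)]
      apply le_antisymm inf_le_left
      apply le_inf le_rfl
      rw [Co.le_iff]
      intro z hz
      rw [Co.mem_sngl] at hz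
      subst hz
      rw [Co.mem_sup]
      refine Or.inr (Or.inr ⟨p (n - (i + 1)), rfl, p (n + 1), rfl, Or.inl ⟨?_, ?_⟩⟩)
      · exact hple (n - (i+1)) (n - i) (by omega) (by omega)
      · exact hple (n - i) (n + 1) (by omega) le_rfl
  -- V computation
  have hVbase : ∀ i, i ≤ n - 1 → Vpoly X X' n i i = Co.emp := by
    intro i hi
    rw [Vpoly_eq, hU n (i + 1) (by omega) (by omega)]
    rw [show X i ⊓ Co.sngl (p (n - (i+1))) =
      Co.sngl (p (n - i)) ⊓ Co.sngl (p (n - (i+1))) from rfl]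
    rw [Co.sngl_inf_sngl (Ne.symm (hpne (n - (i+1)) (n - i) (by omega) (by omega)))]
    rw [show (X i ⊓ X' (i+1) : Co P) = Co.sngl (p (n - i)) ⊓ Co.sngl (p (n + 1)) from rfl]
    rw [Co.sngl_inf_sngl (hpne (n - i) (n + 1) (by omega) le_rfl)]
    exact Co.sup_emp _
  have hV : ∀ k, ∀ i, i ≤ n - 1 → ∀ j, j ≤ i → i - j ≤ k → Vpoly X X' n i j = Co.emp := by
    intro k
    induction' k with k ihk <;> intro i hi j hj hk
    · have h0 : j = i := by omega
      rw [h0]; exact hVbase i hi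
    · rcases eq_or_ne j i with h0 | h0
      · rw [h0]; exact hVbase i hi
      have hj' : j < i := by omega
      rw [Vpoly_lt X X' n hj', ihk i hi (j + 1) (by omega) (by omega), Co.emp_sup]
      exact Co.sngl_inf_sngl (hpne (n - j) (n + 1) (by omega) le_rfl)
  -- W computation
  have hWbase : ∀ i, i + 2 ≤ n → Wpoly X X' n i i = Co.emp := by
    intro i hi
    rw [Wpoly_eq]
    have h1 : (X' (i + 1) ⊔ X' (i + 2) : Co P) = Co.sngl (p (n + 1)) := sup_idem _
    rw [h1]
    rw [show (X i ⊓ Co.sngl (p (n+1)) : Co P) =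
      Co.sngl (p (n - i)) ⊓ Co.sngl (p (n + 1)) from rfl]
    rw [Co.sngl_inf_sngl (hpne (n - i) (n + 1) (by omega) le_rfl)]
    exact Co.emp_inf _
  have hW : ∀ k, ∀ i, i + 2 ≤ n → ∀ j, j ≤ i → i - j ≤ k → Wpoly X X' n i j = Co.emp := by
    intro k
    induction' k with k ihk <;> intro i hi j hj hk
    · have h0 : j = i := by omega
      rw [h0]; exact hWbase i hi
    · rcases eq_or_ne j i with h0 | h0
      · rw [h0]; exact hWbase i hi
      have hj' : j < i := by omega
      rw [Wpoly_lt X X' n hj', ihk i hi (j + 1) (by omega) (by omega), Co.emp_sup]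
      exact Co.sngl_inf_sngl (hpne (n - j) (n + 1) (by omega) le_rfl)
  -- assemble
  have hmain := hid X X'
  rw [hU n 0 (by omega) (by omega)] at hmain
  have hRHS : bigJoin (fun i =>
      if i + 2 ≤ n then Vpoly X X' n i 0 ⊔ Wpoly X X' n i 0 else Vpoly X X' n i 0) (n - 1)
      = Co.emp := by
    apply le_antisymm _ (Co.emp_le _)
    apply bigJoin_le
    intro k hk
    by_cases h2 : k + 2 ≤ n
    · rw [if_pos h2, hV n k (by omega) 0 (by omega) (by omega),
        hW n k h2 0 (by omega) (by omega), Co.sup_emp]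
    · rw [if_neg h2, hV n k (by omega) 0 (by omega) (by omega)]
  rw [hRHS] at hmain
  have : p (n - 0) ∈ (Co.emp : Co P).1 := by
    rw [← hmain]; exact rfl
  exact this

end Converse
section Forward

variable {P : Type*} [PartialOrder P]

/-- Downward propagation along polynomials satisfying `T j = x j ⊓ (T (j+1) ⊔ x' (j+1))`. -/
lemma prop_down (x x' : ℕ → Co P) (T : ℕ → Co P) (i : ℕ)
    (hT : ∀ j < i, T j = x j ⊓ (T (j + 1) ⊔ x' (j + 1)))
    (u b : ℕ → P)
    (hu : ∀ j ≤ i, u j ∈ (x j).1)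
    (hb : ∀ j < i, b (j + 1) ∈ (x' (j + 1)).1)
    (hbet : ∀ j < i, (u (j + 1) ≤ u j ∧ u j ≤ b (j + 1)) ∨ (b (j + 1) ≤ u j ∧ u j ≤ u (j + 1)))
    (hui : u i ∈ (T i).1) : u 0 ∈ (T 0).1 := by
  suffices h : ∀ d j, j + d = i → u j ∈ (T j).1 by exact h i 0 (by omega)
  intro d
  induction' d with d ihd <;> intro j hj
  · have : j = i := by omega
    rw [this]; exact hui
  · have hji : j < i := by omega
    have hnext : u (j + 1) ∈ (T (j + 1)).1 := ihd (j + 1) (by omega)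
    rw [hT j hji, Co.mem_inf]
    refine ⟨hu j (by omega), ?_⟩
    rw [Co.mem_sup]
    rcases hbet j hji with ⟨h1, h2⟩ | ⟨h1, h2⟩
    · exact Or.inr (Or.inr ⟨u (j + 1), hnext, b (j + 1), hb j hji, Or.inl ⟨h1, h2⟩⟩)
    · exact Or.inr (Or.inr ⟨u (j + 1), hnext, b (j + 1), hb j hji, Or.inr ⟨h1, h2⟩⟩)

/-- A strictly increasing sequence of length `m + 1` in a poset of length `≤ n` forces `m ≤ n`. -/
lemma chain_bound {n : ℕ} (hlen : lengthLE P n) (c : ℕ → P) (m : ℕ)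
    (hc : ∀ j < m, c j < c (j + 1)) : m ≤ n := by
  haveI := Classical.decEq P
  have hmono : ∀ a b, a < b → b ≤ m → c a < c b := by
    intro a b hab hbm
    induction' b with b ihb
    · omega
    · rcases Nat.lt_or_ge a b with h | h
      · exact (ihb h (by omega)).trans (hc b (by omega))
      · have : a = b := by omega
        rw [this]; exact hc b (by omega)
  have hinj : Set.InjOn c (Finset.range (m + 1)) := by
    intro a ha b hb hab
    simp only [Finset.coe_range, Set.mem_Iio] at ha hb
    by_contra hne
    rcases Nat.lt_or_ge a b with h | h
    · exact absurd hab (ne_of_lt (hmono a b h (by omega)))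
    · exact absurd hab.symm (ne_of_lt (hmono b a (by omega) (by omega)))
  have hchain : IsChain (· ≤ ·) (((Finset.range (m + 1)).image c : Finset P) : Set P) := by
    intro s hs t ht hst
    simp only [Finset.coe_image, Finset.coe_range, Set.mem_image, Set.mem_Iio] at hs ht
    obtain ⟨a, ha, rfl⟩ := hs
    obtain ⟨b, hb, rfl⟩ := ht
    rcases Nat.lt_or_ge a b with h | h
    · exact Or.inl (hmono a b h (by omega)).le
    · rcases Nat.lt_or_ge b a with h' | h'
      · exact Or.inr (hmono b a h' (by omega)).le
      · exact absurd (congrArg c (by omega : a = b)) hst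
  have hcard := hlen _ hchain
  rw [Finset.card_image_of_injOn hinj, Finset.card_range] at hcard
  omega

end Forward
section ForwardMain

variable {P : Type*} [PartialOrder P]

lemma V_le_RHS (x x' : ℕ → Co P) (n : ℕ) {i : ℕ} (hi : i ≤ n - 1) :
    Vpoly x x' n i 0 ≤ bigJoin (fun i =>
      if i + 2 ≤ n then Vpoly x x' n i 0 ⊔ Wpoly x x' n i 0 else Vpoly x x' n i 0) (n - 1) := by
  refine le_trans ?_ (le_bigJoin _ hi)
  split_ifs with h
  · exact le_sup_left
  · exact le_rfl

lemma W_le_RHS (x x' : ℕ → Co P) (n : ℕ) {i : ℕ} (hi : i + 2 ≤ n) :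
    Wpoly x x' n i 0 ≤ bigJoin (fun i =>
      if i + 2 ≤ n then Vpoly x x' n i 0 ⊔ Wpoly x x' n i 0 else Vpoly x x' n i 0) (n - 1) := by
  refine le_trans ?_ (le_bigJoin _ (show i ≤ n - 1 by omega))
  rw [if_pos hi]
  exact le_sup_right

/-- A full zig-free run of length `n` contradicts `lengthLE P n`. -/
lemma top_case {n : ℕ} (hn : 0 < n) (hlen : lengthLE P n) (u b : ℕ → P)
    (H3 : (∀ j < n, u (j + 1) < u j ∧ u j < b (j + 1)) ∨
          (∀ j < n, b (j + 1) < u j ∧ u j < u (j + 1))) : False := by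
  rcases H3 with Hd | Hi
  · have hb := chain_bound hlen (fun j => if j ≤ n then u (n - j) else b 1) (n + 1) ?_
    · omega
    · intro j hj
      by_cases hjn : j < n
      · have e1 : (if j ≤ n then u (n - j) else b 1) = u (n - j) := if_pos (by omega)
        have e2 : (if j + 1 ≤ n then u (n - (j + 1)) else b 1) = u (n - (j + 1)) :=
          if_pos (by omega)
        simp only [e1, e2]
        have h := (Hd (n - (j + 1)) (by omega)).1
        rwa [show n - (j + 1) + 1 = n - j by omega] at h
      · have hjn' : j = n := by omega
        subst hjn'
        simp only [if_pos (le_refl j), if_neg (show ¬ j + 1 ≤ j by omega),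
          show j - j = 0 by omega]
        exact (Hd 0 hn).2
  · have hb := chain_bound hlen (fun j => if j = 0 then b 1 else u (j - 1)) (n + 1) ?_
    · omega
    · intro j hj
      by_cases hj0 : j = 0
      · subst hj0
        simp only [if_pos rfl, if_neg (by omega : (1:ℕ) ≠ 0)]
        exact (Hi 0 hn).1
      · simp only [if_neg hj0, if_neg (by omega : j + 1 ≠ 0)]
        have h := (Hi (j - 1) (by omega)).2
        rw [show j - 1 + 1 = j by omega] at h
        rwa [show j + 1 - 1 = j by omega]

/-- The main induction for the nontrivial inclusion of (Hₙ). -/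
lemma forward_main {n : ℕ} (hn : 0 < n) (hlen : lengthLE P n) (x x' : ℕ → Co P) :
    ∀ k i, i ≤ n → n - i ≤ k →
    ∀ u b : ℕ → P,
    (∀ j ≤ i, u j ∈ (Upoly x x' n j).1) →
    (∀ j < i, b (j + 1) ∈ (x' (j + 1)).1) →
    ((∀ j < i, u (j + 1) < u j ∧ u j < b (j + 1)) ∨
     (∀ j < i, b (j + 1) < u j ∧ u j < u (j + 1))) →
    u 0 ∈ (bigJoin (fun i =>
      if i + 2 ≤ n then Vpoly x x' n i 0 ⊔ Wpoly x x' n i 0 else Vpoly x x' n i 0) (n - 1)).1 := by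
  intro k
  induction' k with k ihk <;> intro i hi hk u b H1 H2 H3
  · -- fuel 0 : forces i = n, contradiction with the length hypothesis
    have hin : i = n := by omega
    rw [hin] at H3
    exact (top_case hn hlen u b H3).elim
  · rcases eq_or_lt_of_le hi with hin | hilt
    · rw [hin] at H3
      exact (top_case hn hlen u b H3).elim
    -- i < n
    have hux : ∀ j ≤ i, u j ∈ (x j).1 := by
      intro j hj
      have h := H1 j hj
      rw [Upoly_lt x x' n (show j < n by omega), Co.mem_inf] at h
      exact h.1
    have hbet : ∀ j < i, (u (j + 1) ≤ u j ∧ u j ≤ b (j + 1)) ∨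
        (b (j + 1) ≤ u j ∧ u j ≤ u (j + 1)) := by
      intro j hj
      rcases H3 with Hd | Hi'
      · exact Or.inl ⟨(Hd j hj).1.le, (Hd j hj).2.le⟩
      · exact Or.inr ⟨(Hi' j hj).1.le, (Hi' j hj).2.le⟩
    have hstopV : u i ∈ (Upoly x x' n (i + 1)).1 ∨ u i ∈ (x' (i + 1)).1 →
        u 0 ∈ (bigJoin (fun i => if i + 2 ≤ n then Vpoly x x' n i 0 ⊔ Wpoly x x' n i 0
          else Vpoly x x' n i 0) (n - 1)).1 := by
      intro hcase
      have hVii : u i ∈ (Vpoly x x' n i i).1 := by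
        rw [Vpoly_eq, Co.mem_sup]
        rcases hcase with h | h
        · exact Or.inl (Co.mem_inf.2 ⟨hux i le_rfl, h⟩)
        · exact Or.inr (Or.inl (Co.mem_inf.2 ⟨hux i le_rfl, h⟩))
      have h0 := prop_down x x' (Vpoly x x' n i) i (fun j hj => Vpoly_lt x x' n hj)
        u b hux H2 hbet hVii
      exact Co.le_iff.1 (V_le_RHS x x' n (show i ≤ n - 1 by omega)) h0
    have hUi := H1 i le_rfl
    rw [Upoly_lt x x' n hilt, Co.mem_inf] at hUi
    obtain ⟨hxi, hsup⟩ := hUi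
    rw [Co.mem_sup] at hsup
    rcases hsup with hc1 | hc2 | ⟨v, hv, cc, hcc, hvc⟩
    · exact hstopV (Or.inl hc1)
    · exact hstopV (Or.inr hc2)
    by_cases hveq : v = u i
    · exact hstopV (Or.inl (hveq ▸ hv))
    by_cases hceq : cc = u i
    · exact hstopV (Or.inr (hceq ▸ hcc))
    rcases hvc with ⟨h1, h2⟩ | ⟨h1, h2⟩
    · -- case A : v < u i < cc  (new step "decreasing")
      have hv' : v < u i := lt_of_le_of_ne h1 hveq
      have hc' : u i < cc := lt_of_le_of_ne h2 fun e => hceq e.symm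
      by_cases hOK : ∀ j < i, u (j + 1) < u j ∧ u j < b (j + 1)
      · -- continue in the same direction
        have key := ihk (i + 1) (by omega) (by omega)
          (Function.update u (i + 1) v) (Function.update b (i + 1) cc) ?_ ?_ (Or.inl ?_)
        · rwa [Function.update_of_ne (show (0:ℕ) ≠ i + 1 by omega)] at key
        · intro j hj
          rcases eq_or_lt_of_le hj with hje | hje
          · rw [hje, Function.update_self]
            exact hv
          · rw [Function.update_of_ne (show j ≠ i + 1 by omega)]
            exact H1 j (by omega)
        · intro j hj
          rcases eq_or_lt_of_le (Nat.lt_succ_iff.1 hj) with hje | hje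
          · rw [hje, Function.update_self]
            exact hcc
          · rw [Function.update_of_ne (show j + 1 ≠ i + 1 by omega)]
            exact H2 j (by omega)
        · intro j hj
          rcases eq_or_lt_of_le (Nat.lt_succ_iff.1 hj) with hje | hje
          · subst hje
            rw [Function.update_self, Function.update_self,
              Function.update_of_ne (show j ≠ j + 1 by omega)]
            exact ⟨hv', hc'⟩
          · rw [Function.update_of_ne (show j + 1 ≠ i + 1 by omega),
              Function.update_of_ne (show j ≠ i + 1 by omega),
              Function.update_of_ne (show j + 1 ≠ i + 1 by omega)]
            exact hOK j hje
      · -- direction change : W-case, previous direction was increasing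
        have Hi' : ∀ j < i, b (j + 1) < u j ∧ u j < u (j + 1) := by
          rcases H3 with Hd | Hi'
          · exact absurd Hd hOK
          · exact Hi'
        have hi1 : 1 ≤ i := by
          by_contra h'
          exact hOK fun j hj => absurd hj (by omega)
        have hprev := Hi' (i - 1) (by omega)
        rw [show i - 1 + 1 = i by omega] at hprev
        have hbi : b i ∈ (x' i).1 := by
          have h := H2 (i - 1) (by omega)
          rwa [show i - 1 + 1 = i by omega] at h
        have hW : u (i - 1) ∈ (Wpoly x x' n (i - 1) (i - 1)).1 := by
          rw [Wpoly_eq, show i - 1 + 1 = i by omega, show i - 1 + 2 = i + 1 by omega,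
            Co.mem_inf, Co.mem_inf]
          refine ⟨⟨hux (i - 1) (by omega), ?_⟩, ?_⟩
          · rw [Co.mem_sup]
            exact Or.inr (Or.inr ⟨b i, hbi, cc, hcc,
              Or.inl ⟨hprev.1.le, (hprev.2.trans hc').le⟩⟩)
          · rw [Co.mem_sup]
            refine Or.inr (Or.inr ⟨u i, ?_, b i, hbi, Or.inr ⟨hprev.1.le, hprev.2.le⟩⟩)
            rw [Co.mem_inf]
            refine ⟨H1 i le_rfl, ?_⟩
            rw [Co.mem_sup]
            exact Or.inr (Or.inr ⟨u (i - 1), hux (i - 1) (by omega), cc, hcc,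
              Or.inl ⟨hprev.2.le, hc'.le⟩⟩)
        have h0 := prop_down x x' (Wpoly x x' n (i - 1)) (i - 1)
          (fun j hj => Wpoly_lt x x' n hj) u b
          (fun j hj => hux j (by omega)) (fun j hj => H2 j (by omega))
          (fun j hj => Or.inr ⟨(Hi' j (by omega)).1.le, (Hi' j (by omega)).2.le⟩) hW
        exact Co.le_iff.1 (W_le_RHS x x' n (show i - 1 + 2 ≤ n by omega)) h0
    · -- case B : cc < u i < v  (new step "increasing")
      have hc' : cc < u i := lt_of_le_of_ne h1 hceq
      have hv' : u i < v := lt_of_le_of_ne h2 fun e => hveq e.symm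
      by_cases hOK : ∀ j < i, b (j + 1) < u j ∧ u j < u (j + 1)
      · have key := ihk (i + 1) (by omega) (by omega)
          (Function.update u (i + 1) v) (Function.update b (i + 1) cc) ?_ ?_ (Or.inr ?_)
        · rwa [Function.update_of_ne (show (0:ℕ) ≠ i + 1 by omega)] at key
        · intro j hj
          rcases eq_or_lt_of_le hj with hje | hje
          · rw [hje, Function.update_self]
            exact hv
          · rw [Function.update_of_ne (show j ≠ i + 1 by omega)]
            exact H1 j (by omega)
        · intro j hj
          rcases eq_or_lt_of_le (Nat.lt_succ_iff.1 hj) with hje | hje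
          · rw [hje, Function.update_self]
            exact hcc
          · rw [Function.update_of_ne (show j + 1 ≠ i + 1 by omega)]
            exact H2 j (by omega)
        · intro j hj
          rcases eq_or_lt_of_le (Nat.lt_succ_iff.1 hj) with hje | hje
          · subst hje
            rw [Function.update_self, Function.update_self,
              Function.update_of_ne (show j ≠ j + 1 by omega)]
            exact ⟨hc', hv'⟩
          · rw [Function.update_of_ne (show j + 1 ≠ i + 1 by omega),
              Function.update_of_ne (show j ≠ i + 1 by omega),
              Function.update_of_ne (show j + 1 ≠ i + 1 by omega)]
            exact hOK j hje
      · -- direction change : W-case, previous direction was decreasing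
        have Hd : ∀ j < i, u (j + 1) < u j ∧ u j < b (j + 1) := by
          rcases H3 with Hd | Hi'
          · exact Hd
          · exact absurd Hi' hOK
        have hi1 : 1 ≤ i := by
          by_contra h'
          exact hOK fun j hj => absurd hj (by omega)
        have hprev := Hd (i - 1) (by omega)
        rw [show i - 1 + 1 = i by omega] at hprev
        have hbi : b i ∈ (x' i).1 := by
          have h := H2 (i - 1) (by omega)
          rwa [show i - 1 + 1 = i by omega] at h
        have hW : u (i - 1) ∈ (Wpoly x x' n (i - 1) (i - 1)).1 := by
          rw [Wpoly_eq, show i - 1 + 1 = i by omega, show i - 1 + 2 = i + 1 by omega,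
            Co.mem_inf, Co.mem_inf]
          refine ⟨⟨hux (i - 1) (by omega), ?_⟩, ?_⟩
          · rw [Co.mem_sup]
            exact Or.inr (Or.inr ⟨b i, hbi, cc, hcc,
              Or.inr ⟨(hc'.trans hprev.1).le, hprev.2.le⟩⟩)
          · rw [Co.mem_sup]
            refine Or.inr (Or.inr ⟨u i, ?_, b i, hbi, Or.inl ⟨hprev.1.le, hprev.2.le⟩⟩)
            rw [Co.mem_inf]
            refine ⟨H1 i le_rfl, ?_⟩
            rw [Co.mem_sup]
            exact Or.inr (Or.inr ⟨u (i - 1), hux (i - 1) (by omega), cc, hcc,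
              Or.inr ⟨hc'.le, hprev.1.le⟩⟩)
        have h0 := prop_down x x' (Wpoly x x' n (i - 1)) (i - 1)
          (fun j hj => Wpoly_lt x x' n hj) u b
          (fun j hj => hux j (by omega)) (fun j hj => H2 j (by omega))
          (fun j hj => Or.inl ⟨(Hd j (by omega)).1.le, (Hd j (by omega)).2.le⟩) hW
        exact Co.le_iff.1 (W_le_RHS x x' n (show i - 1 + 2 ≤ n by omega)) h0

end ForwardMain
theorem stmt18 (P : Type*) [PartialOrder P] (n : ℕ) (hn : 0 < n) :
    IdH n (Co P) ↔ lengthLE P n := by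
  constructor
  · intro hid
    by_contra h
    exact not_IdH_of_long_chain hn h hid
  · intro hlen
    intro x x'
    apply le_antisymm
    · rw [Co.le_iff]
      intro a ha
      exact forward_main hn hlen x x' n 0 (by omega) (by omega) (fun _ => a) (fun _ => a)
        (fun j hj => by
          have : j = 0 := by omega
          rw [this]; exact ha)
        (fun j hj => absurd hj (by omega))
        (Or.inl fun j hj => absurd hj (by omega))
    · apply bigJoin_le
      intro k hk
      split_ifs with h2
      · exact sup_le (Vpoly_le_Upoly x x' n (by omega) (by omega))
          (Wpoly_le_Upoly x x' n (by omega) h2)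
      · exact Vpoly_le_Upoly x x' n (by omega) (by omega)
end
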